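/- arXiv:2103.10984 — 7 statements merged into one kernel-verified Lean document; each statement's English description precedes it below -/
import Mathlib

section
/- Let (p̃_{j,n}(t)) be the transition probabilities of a continuous-time Markov chain on S, satisfying a Kolmogorov system without catastrophes, and define p_{j,n}(t) = e^{-ξt}·p̃_{j,n}(t) + ξ·∫₀ᵗ e^{-ξτ}·p̃_{0,n}(τ)dτ for a constant ξ > 0. Then for each fixed j, the family (p_{j,n}(t))_{n∈S} is a probability distribution on S for all t ≥ 0, and for each n, lim_{t→∞} p_{j,n}(t) = ξ·∫₀^∞ e^{-ξτ}·p̃_{0,n}(τ)dτ, provided p̃_{0,n} is bounded and measurable. -/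
open Real Filter Set Topology MeasureTheory intervalIntegral

/-- Transition probabilities of a finite-state chain with catastrophes (rate ξ, reset to
state `z`) expressed through the catastrophe-free transition probabilities: they form a
probability distribution for every `t ≥ 0`, and converge as `t → ∞` to
`ξ ∫₀^∞ e^{-ξτ} p̃_{z,n}(τ) dτ`. -/
theorem catastrophe_transition_probabilities
    (S : Type*) [Fintype S] (z : S) (xi : ℝ) (hxi : 0 < xi)
    (ptilde : S → S → ℝ → ℝ)
    (hcont : ∀ j n : S, Continuous (ptilde j n))
    (hnonneg : ∀ j n : S, ∀ t : ℝ, 0 ≤ t → 0 ≤ ptilde j n t)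
    (hle : ∀ j n : S, ∀ t : ℝ, 0 ≤ t → ptilde j n t ≤ 1)
    (hsum : ∀ j : S, ∀ t : ℝ, 0 ≤ t → (∑ n : S, ptilde j n t) = 1)
    (p : S → S → ℝ → ℝ)
    (hp : ∀ j n : S, ∀ t : ℝ, p j n t =
      Real.exp (-xi * t) * ptilde j n t +
        xi * ∫ τ in (0:ℝ)..t, Real.exp (-xi * τ) * ptilde z n τ) :
    (∀ j : S, ∀ t : ℝ, 0 ≤ t →
      (∀ n : S, 0 ≤ p j n t) ∧ (∑ n : S, p j n t) = 1) ∧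
    (∀ j n : S, Tendsto (p j n) atTop
      (𝓝 (xi * ∫ τ in Set.Ioi (0:ℝ), Real.exp (-xi * τ) * ptilde z n τ))) := by
  have hcontI : ∀ n : S, Continuous (fun τ : ℝ => Real.exp (-xi * τ) * ptilde z n τ) := by
    intro n
    exact ((Real.continuous_exp.comp (continuous_const.mul continuous_id)).mul (hcont z n))
  have hII : ∀ (n : S) (a b : ℝ),
      IntervalIntegrable (fun τ : ℝ => Real.exp (-xi * τ) * ptilde z n τ) volume a b := by
    intro n a b; exact (hcontI n).intervalIntegrable a b
  constructor
  · intro j t ht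
    constructor
    · intro n
      rw [hp]
      have h1 : 0 ≤ Real.exp (-xi * t) * ptilde j n t :=
        mul_nonneg (Real.exp_pos _).le (hnonneg j n t ht)
      have h2 : 0 ≤ ∫ τ in (0:ℝ)..t, Real.exp (-xi * τ) * ptilde z n τ := by
        apply intervalIntegral.integral_nonneg ht
        intro u hu
        exact mul_nonneg (Real.exp_pos _).le (hnonneg z n u hu.1)
      positivity
    · have hexch : (∑ n : S, xi * ∫ τ in (0:ℝ)..t, Real.exp (-xi * τ) * ptilde z n τ)
          = xi * ∫ τ in (0:ℝ)..t, ∑ n : S, Real.exp (-xi * τ) * ptilde z n τ := by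
        rw [intervalIntegral.integral_finset_sum (fun n _ => hII n 0 t), Finset.mul_sum]
      have hval : (∫ τ in (0:ℝ)..t, ∑ n : S, Real.exp (-xi * τ) * ptilde z n τ)
          = ∫ τ in (0:ℝ)..t, Real.exp (-xi * τ) := by
        apply intervalIntegral.integral_congr
        intro u hu
        rw [Set.uIcc_of_le ht] at hu
        simp only
        rw [← Finset.mul_sum, hsum z u hu.1, mul_one]
      have hexp : (∫ τ in (0:ℝ)..t, Real.exp (-xi * τ))
          = (1 - Real.exp (-xi * t)) / xi := by
        have : (∫ τ in (0:ℝ)..t, Real.exp (-xi * τ))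
            = (-(1/xi)) * Real.exp (-xi * t) - (-(1/xi)) * Real.exp (-xi * 0) := by
          apply intervalIntegral.integral_eq_sub_of_hasDerivAt (f := fun u => (-(1/xi)) * Real.exp (-xi * u))
          · intro u _
            have : HasDerivAt (fun u : ℝ => Real.exp (-xi * u)) (Real.exp (-xi * u) * (-xi)) u := by
              have h := (Real.hasDerivAt_exp (-xi * u)).comp u ((hasDerivAt_id u).const_mul (-xi))
              simpa [Function.comp_def, mul_comm] using h
            have h2 := this.const_mul (-(1/xi))
            convert h2 using 1
            · rfl
            · rw [mul_comm (Real.exp _) (-xi), ← mul_assoc, neg_mul_neg, one_div, inv_mul_cancel₀ hxi.ne', one_mul]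
          · exact (Real.continuous_exp.comp (continuous_const.mul continuous_id)).intervalIntegrable 0 t
        rw [this]
        field_simp
        simp only [mul_zero, neg_zero, Real.exp_zero]
        ring
      simp only [hp]
      rw [Finset.sum_add_distrib, ← Finset.mul_sum, hsum j t ht, hexch, hval, hexp]
      field_simp
      ring
  · intro j n
    have hint : IntegrableOn (fun τ : ℝ => Real.exp (-xi * τ) * ptilde z n τ)
        (Set.Ioi (0:ℝ)) volume := by
      apply MeasureTheory.Integrable.mono' (g := fun τ => Real.exp (-xi * τ))
        (exp_neg_integrableOn_Ioi 0 hxi)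
      · exact (hcontI n).aestronglyMeasurable.restrict
      · filter_upwards [ae_restrict_mem measurableSet_Ioi] with u hu
        rw [Real.norm_eq_abs, abs_mul, abs_of_pos (Real.exp_pos _)]
        have h1 : |ptilde z n u| ≤ 1 := by
          rw [abs_of_nonneg (hnonneg z n u (le_of_lt hu))]
          exact hle z n u (le_of_lt hu)
        nlinarith [Real.exp_pos (-xi * u)]
    have h2 : Tendsto (fun t => xi * ∫ τ in (0:ℝ)..t, Real.exp (-xi * τ) * ptilde z n τ)
        atTop (𝓝 (xi * ∫ τ in Set.Ioi (0:ℝ), Real.exp (-xi * τ) * ptilde z n τ)) :=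
      (MeasureTheory.intervalIntegral_tendsto_integral_Ioi 0 hint tendsto_id).const_mul xi
    have h1 : Tendsto (fun t => Real.exp (-xi * t) * ptilde j n t) atTop (𝓝 0) := by
      apply tendsto_of_tendsto_of_tendsto_of_le_of_le' (g := fun _ : ℝ => (0:ℝ))
        (h := fun t => Real.exp (-xi * t)) tendsto_const_nhds
      · have : Tendsto (fun t : ℝ => -xi * t) atTop atBot :=
          Tendsto.const_mul_atTop_of_neg (neg_neg_iff_pos.mpr hxi) tendsto_id
        exact Real.tendsto_exp_atBot.comp this
      · filter_upwards [eventually_ge_atTop (0:ℝ)] with t ht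
        exact mul_nonneg (Real.exp_pos _).le (hnonneg j n t ht)
      · filter_upwards [eventually_ge_atTop (0:ℝ)] with t ht
        nlinarith [Real.exp_pos (-xi * t), hle j n t ht, hnonneg j n t ht]
    have := h1.add h2
    rw [zero_add] at this
    apply this.congr
    intro t
    rw [hp]
end

section
/- Let g̃: [0,∞) → [0,∞) be a probability density (∫₀^∞ g̃ = 1) and ξ > 0. Define g(t) = e^{-ξt}·g̃(t) + ξ·e^{-ξt}·[1 - ∫₀ᵗ g̃(τ)dτ]. Then g is a probability density on [0,∞), i.e. g ≥ 0 and ∫₀^∞ g(t)dt = 1, and g(0) = g̃(0) + ξ. -/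
open Real Set MeasureTheory intervalIntegral

/-- If `g̃` is a continuous probability density on `[0,∞)` and `ξ > 0`, then the
first-passage-time density with catastrophes
`g(t) = e^{-ξt} g̃(t) + ξ e^{-ξt} (1 - ∫₀ᵗ g̃)` is again a probability density on
`[0,∞)`, and `g(0) = g̃(0) + ξ`. -/
theorem catastrophe_fpt_density (gt : ℝ → ℝ) (xi : ℝ) (hxi : 0 < xi)
    (hcont : Continuous gt)
    (hnonneg : ∀ t : ℝ, 0 ≤ t → 0 ≤ gt t)
    (hint : IntegrableOn gt (Set.Ioi (0:ℝ)))
    (hone : (∫ t in Set.Ioi (0:ℝ), gt t) = 1)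
    (g : ℝ → ℝ)
    (hg : ∀ t : ℝ, g t = Real.exp (-xi * t) * gt t +
      xi * Real.exp (-xi * t) * (1 - ∫ τ in (0:ℝ)..t, gt τ)) :
    (∀ t : ℝ, 0 ≤ t → 0 ≤ g t) ∧
    (∫ t in Set.Ioi (0:ℝ), g t) = 1 ∧
    g 0 = gt 0 + xi := by
  set H : ℝ → ℝ := fun t => ∫ τ in (0:ℝ)..t, gt τ with hHdef
  have hae : 0 ≤ᵐ[volume.restrict (Set.Ioi (0:ℝ))] gt := by
    filter_upwards [ae_restrict_mem measurableSet_Ioi] with x hx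
    exact hnonneg x (le_of_lt hx)
  have hH0 : ∀ t : ℝ, 0 ≤ t → 0 ≤ H t := fun t ht =>
    intervalIntegral.integral_nonneg ht (fun x hx => hnonneg x hx.1)
  have hH1 : ∀ t : ℝ, 0 ≤ t → H t ≤ 1 := by
    intro t ht
    have : H t = ∫ τ in Set.Ioc (0:ℝ) t, gt τ := intervalIntegral.integral_of_le ht
    rw [this, ← hone]
    exact setIntegral_mono_set hint hae
      (HasSubset.Subset.eventuallyLE Ioc_subset_Ioi_self)
  have hHcont : Continuous H :=
    intervalIntegral.continuous_primitive (fun a b => hcont.intervalIntegrable a b) 0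
  -- nonnegativity
  have h1 : ∀ t : ℝ, 0 ≤ t → 0 ≤ g t := by
    intro t ht
    rw [hg t]
    have he : (0:ℝ) ≤ Real.exp (-xi * t) := (Real.exp_pos _).le
    apply add_nonneg (mul_nonneg he (hnonneg t ht))
    apply mul_nonneg (by positivity)
    linarith [hH1 t ht]
  refine ⟨h1, ?_, ?_⟩
  · -- the improper integral equals 1
    set f : ℝ → ℝ := fun t => -(Real.exp (-xi * t) * (1 - H t)) with hfdef
    have hfderiv : ∀ x : ℝ, HasDerivAt f (g x) x := by
      intro x
      have hE : HasDerivAt (fun t => Real.exp (-xi * t)) (Real.exp (-xi * x) * (-xi)) x := by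
        have := ((hasDerivAt_id x).const_mul (-xi)).exp
        simpa using this
      have hH' : HasDerivAt H (gt x) x :=
        intervalIntegral.integral_hasDerivAt_right (hcont.intervalIntegrable 0 x)
          hcont.aestronglyMeasurable.stronglyMeasurableAtFilter hcont.continuousAt
      have h2 : HasDerivAt (fun t => (1 : ℝ) - H t) (-gt x) x := by
        exact hH'.const_sub (1:ℝ)
      have : HasDerivAt f (-(Real.exp (-xi * x) * (-xi) * (1 - H x) + Real.exp (-xi * x) * (-gt x))) x :=
        (hE.mul h2).neg
      convert this using 1
      rw [hg x]; ring
    have hHtend : Filter.Tendsto H Filter.atTop (nhds 1) := by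
      have := MeasureTheory.intervalIntegral_tendsto_integral_Ioi 0 hint Filter.tendsto_id
      simpa [hone] using this
    have hEtend : Filter.Tendsto (fun t : ℝ => Real.exp (-xi * t)) Filter.atTop (nhds 0) := by
      apply Real.tendsto_exp_atBot.comp
      exact Filter.Tendsto.const_mul_atTop_of_neg (neg_neg_iff_pos.mpr hxi) Filter.tendsto_id
    have hftend : Filter.Tendsto f Filter.atTop (nhds 0) := by
      have : Filter.Tendsto (fun t => Real.exp (-xi * t) * (1 - H t)) Filter.atTop
          (nhds (0 * (1 - 1))) := hEtend.mul ((tendsto_const_nhds).sub hHtend)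
      simpa [hfdef] using this.neg
    have hgint : IntegrableOn g (Set.Ioi (0:ℝ)) := by
      have hexp : IntegrableOn (fun t => Real.exp (-xi * t)) (Set.Ioi (0:ℝ)) :=
        exp_neg_integrableOn_Ioi 0 hxi
      have hi1 : IntegrableOn (fun t => Real.exp (-xi * t) * gt t) (Set.Ioi (0:ℝ)) := by
        apply MeasureTheory.Integrable.mono hint
          (((Continuous.mul (by fun_prop) hcont)).aestronglyMeasurable.restrict)
        · filter_upwards [ae_restrict_mem measurableSet_Ioi] with x hx
          have h0 : 0 ≤ gt x := hnonneg x hx.le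
          have : Real.exp (-xi * x) ≤ 1 := by
            apply Real.exp_le_one_iff.mpr
            nlinarith [(Set.mem_Ioi.mp hx).le]
          simp only [Pi.mul_apply, norm_mul, Real.norm_eq_abs, abs_of_nonneg h0,
            abs_of_nonneg (Real.exp_pos (-xi*x)).le, Real.norm_eq_abs]
          nlinarith
      have hi2 : IntegrableOn (fun t => xi * Real.exp (-xi * t) * (1 - H t))
          (Set.Ioi (0:ℝ)) := by
        apply MeasureTheory.Integrable.mono (hexp.const_mul xi)
          (((continuous_const.mul (by fun_prop : Continuous fun t : ℝ => Real.exp (-xi*t))).mul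
            (continuous_const.sub hHcont)).aestronglyMeasurable.restrict)
        filter_upwards [ae_restrict_mem measurableSet_Ioi] with x hx
        have h0 := hH0 x hx.le
        have h1' := hH1 x hx.le
        have he := (Real.exp_pos (-xi * x)).le
        simp only [Pi.mul_apply, Pi.sub_apply, norm_mul, Real.norm_eq_abs, abs_of_nonneg he, abs_of_pos hxi,
          abs_of_nonneg (by linarith : (0:ℝ) ≤ 1 - H x)]
        nlinarith [mul_nonneg (mul_nonneg hxi.le he) h0]
      refine (hi1.add hi2).congr ?_
      filter_upwards with t
      exact (hg t).symm
    have key := MeasureTheory.integral_Ioi_of_hasDerivAt_of_tendsto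
      (f := f) (f' := g) (a := 0) (m := 0)
      (hfderiv 0).continuousAt.continuousWithinAt
      (fun x _ => hfderiv x) hgint hftend
    have hf0 : f 0 = -1 := by
      simp [hfdef, hHdef]
    rw [key, hf0]; ring
  · rw [hg 0]
    simp [mul_comm]
end

section
/- For reals a > 0, b > 0 and |u| < 1, |v| < 1, the integral ∫₀¹ x^{a-1}(1-x)^{b-1}(1-ux)^{-ρ}(1-vx)^{-σ} dx equals B(b,a)·F₁(a, ρ, σ, a+b; u, v), where B is the Beta function and F₁(α,β,γ,δ; x,y) = Σ_{m,n≥0} ((α)_{m+n}(β)_m(γ)_n/(δ)_{m+n}) · x^m y^n/(m! n!) is the Appell hypergeometric function of two variables. -/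
open Real Set MeasureTheory intervalIntegral

open Filter

namespace AppellAux

noncomputable def asc (c : ℝ) (n : ℕ) : ℝ := (ascPochhammer ℝ n).eval c

lemma asc_zero (c : ℝ) : asc c 0 = 1 := by simp [asc]

lemma asc_succ (c : ℝ) (n : ℕ) : asc c (n + 1) = asc c n * (c + n) := by
  simp [asc, ascPochhammer_succ_eval]

lemma asc_nonneg {c : ℝ} (hc : 0 ≤ c) (n : ℕ) : 0 ≤ asc c n := by
  induction n with
  | zero => simp [asc_zero]
  | succ n ih => rw [asc_succ]; positivity

lemma asc_pos {c : ℝ} (hc : 0 < c) (n : ℕ) : 0 < asc c n := by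
  induction n with
  | zero => simp [asc_zero]
  | succ n ih => rw [asc_succ]; positivity

lemma abs_asc_le (c : ℝ) (n : ℕ) : |asc c n| ≤ asc |c| n := by
  induction n with
  | zero => simp [asc_zero]
  | succ n ih =>
    rw [asc_succ, asc_succ, abs_mul]
    apply mul_le_mul ih ((abs_add_le _ _).trans (by simp)) (abs_nonneg _)
      (asc_nonneg (abs_nonneg c) n)

lemma asc_le_asc {c d : ℝ} (hc : 0 ≤ c) (hcd : c ≤ d) (n : ℕ) : asc c n ≤ asc d n := by
  induction n with
  | zero => simp [asc_zero]
  | succ n ih =>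
    rw [asc_succ, asc_succ]
    apply mul_le_mul ih (by linarith) (by positivity) (asc_nonneg (by linarith) n)

/-- Ratio-test helper for Pochhammer-type series. -/
lemma summable_poch (P : ℕ → ℝ) (C t : ℝ) (ht : |t| < 1)
    (hP : ∀ᶠ m in atTop, |P (m + 1)| ≤ (C + m) * |P m|) :
    Summable (fun m => P m * t ^ m / m.factorial) := by
  have h0 : (0:ℝ) ≤ |t| := abs_nonneg t
  set r : ℝ := (1 + |t|) / 2 with hr
  have hr1 : r < 1 := by rw [hr]; linarith
  have htr : |t| < r := by rw [hr]; linarith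
  apply summable_of_ratio_norm_eventually_le hr1
  have hten : Tendsto (fun m : ℕ => (C + m) * |t| / (m + 1)) atTop (nhds |t|) := by
    have : (fun m : ℕ => (C + m) * |t| / (m + 1)) =
        fun m : ℕ => |t| + (C - 1) * |t| * (1 / (m + 1)) := by
      funext m
      have hm : (m : ℝ) + 1 ≠ 0 := by positivity
      field_simp
      ring
    rw [this]
    have := (tendsto_one_div_add_atTop_nhds_zero_nat.const_mul ((C - 1) * |t|)).const_add |t|
    simpa using this
  have hev : ∀ᶠ m : ℕ in atTop, (C + m) * |t| / (m + 1) ≤ r :=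
    hten.eventually_le_const htr
  filter_upwards [hP, hev] with m h1 h2
  have hfac : (Nat.factorial (m + 1) : ℝ) = ((m:ℝ) + 1) * m.factorial := by
    push_cast [Nat.factorial_succ]; ring
  have hfp : (0:ℝ) < (m.factorial : ℝ) := by positivity
  have hm1 : (0:ℝ) < (m:ℝ) + 1 := by positivity
  simp only [Real.norm_eq_abs, abs_div, abs_mul, abs_pow, abs_abs, Nat.abs_cast]
  calc |P (m + 1)| * |t| ^ (m + 1) / (Nat.factorial (m + 1) : ℝ)
      = ((|t| ^ m * |t|) / (((m:ℝ) + 1) * m.factorial)) * |P (m + 1)| := by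
        rw [hfac, pow_succ]; ring
    _ ≤ ((|t| ^ m * |t|) / (((m:ℝ) + 1) * m.factorial)) * ((C + m) * |P m|) :=
        mul_le_mul_of_nonneg_left h1 (by positivity)
    _ = ((C + m) * |t| / ((m:ℝ) + 1)) * (|P m| * |t| ^ m / m.factorial) := by
        field_simp
    _ ≤ r * (|P m| * |t| ^ m / m.factorial) :=
        mul_le_mul_of_nonneg_right h2 (by positivity)

lemma summable_binom (c : ℝ) {t : ℝ} (ht : |t| < 1) :
    Summable (fun m : ℕ => asc c m * t ^ m / m.factorial) := by
  apply summable_poch (asc c) |c| t ht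
  apply Filter.Eventually.of_forall
  intro m
  rw [asc_succ, abs_mul]
  refine mul_le_mul_of_nonneg_left ?_ (abs_nonneg _) |>.trans_eq (mul_comm _ _)
  calc |c + (m:ℝ)| ≤ |c| + |(m:ℝ)| := abs_add_le _ _
    _ = |c| + m := by rw [Nat.abs_cast]

set_option maxHeartbeats 1000000 in
lemma hasSum_binom (c : ℝ) {t : ℝ} (ht : |t| < 1) :
    HasSum (fun m : ℕ => asc c m * t ^ m / m.factorial) ((1 - t) ^ (-c)) := by
  set r : ℝ := (1 + |t|) / 2 with hrdef
  have h0 : (0:ℝ) ≤ |t| := abs_nonneg t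
  have hr0 : 0 < r := by rw [hrdef]; linarith
  have hr1 : r < 1 := by rw [hrdef]; linarith
  have htr : |t| < r := by rw [hrdef]; linarith
  set s : Set ℝ := Ioo (-r) r with hsdef
  have hts : t ∈ s := by
    constructor
    · linarith [neg_abs_le t]
    · linarith [le_abs_self t]
  have h0s : (0:ℝ) ∈ s := ⟨by linarith, hr0⟩
  set g : ℕ → ℝ → ℝ := fun n y => asc c n * y ^ n / n.factorial with hgdef
  set g' : ℕ → ℝ → ℝ := fun n y => asc c n * ((n:ℝ) * y ^ (n - 1)) / n.factorial with hg'def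
  set u : ℕ → ℝ := fun n => (|asc c n| * n / r) * r ^ n / n.factorial with hudef
  -- summability of the derivative bounds
  have hu : Summable u := by
    apply summable_poch _ (|c| + 3) r (by rw [abs_of_pos hr0]; exact hr1)
    filter_upwards [Filter.eventually_ge_atTop ⌈|c|⌉₊] with n hn
    have hcn : |c| ≤ n := (Nat.ceil_le.mp hn)
    have h1 : |asc c (n + 1)| ≤ (|c| + n) * |asc c n| := by
      rw [asc_succ, abs_mul, mul_comm]
      refine mul_le_mul_of_nonneg_right ?_ (abs_nonneg _)
      calc |c + (n:ℝ)| ≤ |c| + |(n:ℝ)| := abs_add_le _ _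
        _ = |c| + n := by rw [Nat.abs_cast]
    have hP : ∀ k : ℕ, |(|asc c k| * k / r)| = |asc c k| * k / r := fun k =>
      abs_of_nonneg (by positivity)
    rw [hP, hP, div_le_iff₀ hr0]
    have hclear : (|c| + 3 + (n:ℝ)) * (|asc c n| * ↑n / r) * r = (|c| + 3 + n) * (|asc c n| * n) := by
      field_simp
    rw [hclear]
    push_cast
    nlinarith [abs_nonneg (asc c n), abs_nonneg (asc c (n+1)), Nat.cast_nonneg (α := ℝ) n]
  -- pointwise derivatives
  have hg : ∀ n y, HasDerivAt (g n) (g' n y) y := fun n y =>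
    ((hasDerivAt_pow n y).const_mul (asc c n)).div_const _
  have hg' : ∀ n, ∀ y ∈ s, ‖g' n y‖ ≤ u n := by
    intro n y hy
    have hyr : |y| ≤ r := le_of_lt (abs_lt.mpr ⟨hy.1, hy.2⟩)
    rcases n with _ | n
    · simp [hg'def, hudef]
    · have hgv : g' (n + 1) y = asc c (n + 1) * (((n:ℝ) + 1) * y ^ n) / ((n+1).factorial : ℝ) := by
        simp only [hg'def, Nat.add_sub_cancel]
        push_cast; ring
      have hthis : ‖g' (n + 1) y‖ = |asc c (n + 1)| * (((n:ℝ) + 1) * |y| ^ n) / ((n + 1).factorial : ℝ) := by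
        rw [hgv, Real.norm_eq_abs, abs_div, abs_mul, abs_mul, abs_pow,
          abs_of_nonneg (by positivity : (0:ℝ) ≤ (n:ℝ) + 1),
          abs_of_nonneg (by positivity : (0:ℝ) ≤ ((n+1).factorial : ℝ))]
      rw [hthis]
      have hun : u (n + 1) = |asc c (n + 1)| * (((n:ℝ) + 1) * r ^ n) / ((n + 1).factorial : ℝ) := by
        simp only [hudef]
        rw [pow_succ]
        push_cast
        field_simp
      rw [hun]
      have hyn : |y| ^ n ≤ r ^ n := pow_le_pow_left₀ (abs_nonneg y) hyr n
      gcongr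
  have hsum_at : ∀ y : ℝ, |y| < 1 → Summable fun n => g n y := fun y hy => summable_binom c hy
  have hsum0 : Summable fun n => g n 0 := hsum_at 0 (by simp)
  -- derivative of the sum
  have hf' : ∀ y ∈ s, HasDerivAt (fun z => ∑' n, g n z) (∑' n, g' n y) y := by
    intro y hy
    exact hasDerivAt_tsum_of_isPreconnected hu isOpen_Ioo (convex_Ioo _ _).isPreconnected
      (fun n z _ => hg n z) hg' h0s hsum0 hy
  -- the ODE
  have hODE : ∀ y ∈ s, (1 - y) * (∑' n, g' n y) = c * (∑' n, g n y) := by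
    intro y hy
    have hy1 : |y| < 1 := lt_trans (abs_lt.mpr ⟨hy.1, hy.2⟩) hr1
    have hsg : Summable fun n => g n y := hsum_at y hy1
    have hsg' : Summable fun n => g' n y := hu.of_norm_bounded (fun n => hg' n y hy)
    have key2 : c * (∑' n, g n y) + y * (∑' n, g' n y) = ∑' n, asc c (n+1) * y ^ n / n.factorial := by
      rw [← tsum_mul_left, ← tsum_mul_left, ← Summable.tsum_add (hsg.mul_left c) (hsg'.mul_left y)]
      congr 1; funext n
      rcases n with _ | n
      · simp [hgdef, hg'def, asc_succ]; ring
      · have hfac : ((n+1).factorial : ℝ) = ((n:ℝ) + 1) * n.factorial := by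
          push_cast [Nat.factorial_succ]; ring
        simp only [hgdef, hg'def, asc_succ, Nat.add_sub_cancel]
        have hfp : (0:ℝ) < (n.factorial : ℝ) := by positivity
        field_simp [hfac]
        push_cast
        ring
    have key1 : (∑' n, g' n y) = ∑' n, asc c (n+1) * y ^ n / n.factorial := by
      rw [Summable.tsum_eq_zero_add hsg']
      have h00 : g' 0 y = 0 := by simp [hg'def]
      rw [h00, zero_add]
      congr 1; funext n
      have hfac : ((n+1).factorial : ℝ) = ((n:ℝ) + 1) * n.factorial := by
        push_cast [Nat.factorial_succ]; ring
      simp only [hg'def, Nat.add_sub_cancel]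
      have hfp : (0:ℝ) < (n.factorial : ℝ) := by positivity
      field_simp [hfac]
      rw [hfac]; push_cast
      ring
    rw [key1] at key2 ⊢
    linarith [key2]
  -- F is constant
  set F : ℝ → ℝ := fun z => (1 - z) ^ (c:ℝ) * ∑' n, g n z with hFdef
  have hF' : ∀ y ∈ s, HasDerivAt F 0 y := by
    intro y hy
    have hy1 : y < 1 := lt_trans hy.2 hr1
    have h1y : 0 < 1 - y := by linarith
    have h1 : HasDerivAt (fun z : ℝ => (1 - z) ^ (c:ℝ)) (c * (1 - y) ^ (c - 1) * (-1)) y := by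
      have hin : HasDerivAt (fun z : ℝ => 1 - z) (-1) y := (hasDerivAt_id y).const_sub 1
      exact (Real.hasDerivAt_rpow_const (Or.inl (ne_of_gt h1y))).comp y hin
    have h2 := hf' y hy
    have := h1.mul h2
    refine this.congr_deriv ?_
    have hprod : (1 - y) ^ (c:ℝ) * (∑' n, g' n y) = (1 - y) ^ (c - 1) * (c * ∑' n, g n y) := by
      have e1 : (1 - y) ^ (c:ℝ) = (1 - y) ^ (c - 1) * (1 - y) := by
        have h2 := Real.rpow_add_one (ne_of_gt h1y) (c - 1)
        rwa [sub_add_cancel] at h2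
      rw [e1, mul_assoc, hODE y hy]
    rw [hprod]
    ring
  have hconst : F t = F 0 := by
    rcases le_or_gt 0 t with h0t | ht0
    · have hsub : Icc (0:ℝ) t ⊆ s := fun x hx => ⟨by linarith [hx.1], lt_of_le_of_lt hx.2 hts.2⟩
      exact constant_of_has_deriv_right_zero
        (fun x hx => ((hF' x (hsub hx)).continuousAt).continuousWithinAt)
        (fun x hx => ((hF' x (hsub ⟨hx.1, le_of_lt hx.2⟩)).hasDerivWithinAt))
        t ⟨h0t, le_refl t⟩
    · have hsub : Icc t (0:ℝ) ⊆ s := fun x hx => ⟨lt_of_lt_of_le hts.1 hx.1, by linarith [hx.2, hr0]⟩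
      exact (constant_of_has_deriv_right_zero
        (fun x hx => ((hF' x (hsub hx)).continuousAt).continuousWithinAt)
        (fun x hx => ((hF' x (hsub ⟨hx.1, le_of_lt hx.2⟩)).hasDerivWithinAt))
        0 ⟨le_of_lt ht0, le_refl 0⟩).symm
  have hF0 : F 0 = 1 := by
    have : (∑' n, g n 0) = 1 := by
      rw [tsum_eq_single 0]
      · simp [hgdef, asc_zero]
      · intro n hn
        rcases n with _ | n
        · exact absurd rfl hn
        · simp [hgdef]
    simp [hFdef, this]
  have h1t : 0 < 1 - t := by linarith [le_abs_self t, abs_lt.mp ht]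
  have hval : (∑' n, g n t) = (1 - t) ^ (-c) := by
    have hne : (1 - t) ^ (c:ℝ) ≠ 0 := ne_of_gt (Real.rpow_pos_of_pos h1t c)
    have h3 : (1 - t) ^ (c:ℝ) * (∑' n, g n t) = 1 := by
      have h4 := hconst.trans hF0
      simp only [hFdef] at h4
      exact h4
    rw [Real.rpow_neg (le_of_lt h1t)]
    rw [mul_comm] at h3
    exact eq_inv_of_mul_eq_one_left h3
  exact (hsum_at t ht).hasSum_iff.mpr hval

lemma Gamma_add_nat {a : ℝ} (ha : 0 < a) (n : ℕ) :
    Real.Gamma (a + n) = asc a n * Real.Gamma a := by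
  induction n with
  | zero => simp [asc_zero]
  | succ n ih =>
    have hpos : (0:ℝ) < a + n := by positivity
    have he : a + ((n:ℝ) + 1) = (a + n) + 1 := by ring
    rw [show ((n + 1 : ℕ):ℝ) = (n:ℝ) + 1 by push_cast; ring, he,
      Real.Gamma_add_one (ne_of_gt hpos), ih, asc_succ]
    ring

lemma beta_integrable {p q : ℝ} (hp : 0 < p) (hq : 0 < q) :
    IntegrableOn (fun x : ℝ => x ^ (p - 1) * (1 - x) ^ (q - 1)) (Ioc 0 1) := by
  have h := (Complex.betaIntegral_convergent (u := (p:ℂ)) (v := (q:ℂ))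
    (by simpa) (by simpa)).1
  have hre := h.re
  apply hre.congr
  filter_upwards [ae_restrict_mem measurableSet_Ioc] with x hx
  have hx0 : (0:ℝ) ≤ x := le_of_lt hx.1
  have hx1 : (0:ℝ) ≤ 1 - x := by linarith [hx.2]
  rw [show ((p:ℂ) - 1) = ((p - 1 : ℝ) : ℂ) by push_cast; ring,
    show ((q:ℂ) - 1) = ((q - 1 : ℝ) : ℂ) by push_cast; ring,
    ← Complex.ofReal_cpow hx0 (p - 1), show ((1:ℂ) - (x:ℂ)) = ((1 - x : ℝ) : ℂ) by push_cast; ring,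
    ← Complex.ofReal_cpow hx1 (q - 1), ← Complex.ofReal_mul]
  simp

lemma beta_eq {p q : ℝ} (hp : 0 < p) (hq : 0 < q) :
    ∫ x in Ioc (0:ℝ) 1, x ^ (p - 1) * (1 - x) ^ (q - 1) =
      Real.Gamma p * Real.Gamma q / Real.Gamma (p + q) := by
  have key := Complex.Gamma_mul_Gamma_eq_betaIntegral (s := (p:ℂ)) (t := (q:ℂ))
    (by simpa) (by simpa)
  have hcong : Complex.betaIntegral p q =
      ((∫ x in (0:ℝ)..1, x ^ (p - 1) * (1 - x) ^ (q - 1) : ℝ) : ℂ) := by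
    rw [Complex.betaIntegral, ← intervalIntegral.integral_ofReal]
    apply intervalIntegral.integral_congr
    intro x hx
    rw [uIcc_of_le (by norm_num : (0:ℝ) ≤ 1)] at hx
    have hx0 : (0:ℝ) ≤ x := hx.1
    have hx1 : (0:ℝ) ≤ 1 - x := by linarith [hx.2]
    beta_reduce
    rw [show ((p:ℂ) - 1) = ((p - 1 : ℝ) : ℂ) by push_cast; ring,
      show ((q:ℂ) - 1) = ((q - 1 : ℝ) : ℂ) by push_cast; ring,
      ← Complex.ofReal_cpow hx0 (p - 1),
      show ((1:ℂ) - (x:ℂ)) = ((1 - x : ℝ) : ℂ) by push_cast; ring,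
      ← Complex.ofReal_cpow hx1 (q - 1), ← Complex.ofReal_mul]
  rw [hcong, show (p:ℂ) + (q:ℂ) = ((p + q : ℝ) : ℂ) by push_cast; ring,
    Complex.Gamma_ofReal, Complex.Gamma_ofReal, Complex.Gamma_ofReal,
    ← Complex.ofReal_mul, ← Complex.ofReal_mul] at key
  have hreal : Real.Gamma p * Real.Gamma q =
      Real.Gamma (p + q) * ∫ x in (0:ℝ)..1, x ^ (p - 1) * (1 - x) ^ (q - 1) :=
    Complex.ofReal_injective key
  have hG : Real.Gamma (p + q) ≠ 0 := ne_of_gt (Real.Gamma_pos_of_pos (by linarith))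
  rw [← intervalIntegral.integral_of_le (by norm_num : (0:ℝ) ≤ 1)]
  rw [eq_div_iff hG]
  linarith [hreal]

end AppellAux

open AppellAux

set_option maxHeartbeats 1000000 in
/-- Euler-type integral representation of the first Appell hypergeometric function
(Gradshteyn–Ryzhik 3.211). `(α)_n` is the rising factorial `ascPochhammer`. -/
theorem appell_F1_integral (a b rho sigma u v : ℝ)
    (ha : 0 < a) (hb : 0 < b) (hu : |u| < 1) (hv : |v| < 1) :
    (∫ x in (0:ℝ)..1, x ^ (a - 1) * (1 - x) ^ (b - 1) *
        (1 - u * x) ^ (-rho) * (1 - v * x) ^ (-sigma)) =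
      (Real.Gamma b * Real.Gamma a / Real.Gamma (b + a)) *
        ∑' m : ℕ, ∑' n : ℕ,
          ((ascPochhammer ℝ (m + n)).eval a * (ascPochhammer ℝ m).eval rho *
              (ascPochhammer ℝ n).eval sigma / (ascPochhammer ℝ (m + n)).eval (a + b)) *
            u ^ m * v ^ n / (Nat.factorial m * Nat.factorial n) := by
  have hGab : (0:ℝ) < Real.Gamma (a + b) := Real.Gamma_pos_of_pos (by linarith)
  set bet : ℝ → ℝ := fun x => x ^ (a - 1) * (1 - x) ^ (b - 1) with hbetdef
  set F : ℕ × ℕ → ℝ → ℝ := fun p x => bet x *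
    ((asc rho p.1 * (u * x) ^ p.1 / (p.1.factorial : ℝ)) *
     (asc sigma p.2 * (v * x) ^ p.2 / (p.2.factorial : ℝ))) with hFdef
  set T : ℕ × ℕ → ℝ := fun p =>
    ((ascPochhammer ℝ (p.1 + p.2)).eval a * (ascPochhammer ℝ p.1).eval rho *
        (ascPochhammer ℝ p.2).eval sigma / (ascPochhammer ℝ (p.1 + p.2)).eval (a + b)) *
      u ^ p.1 * v ^ p.2 / (Nat.factorial p.1 * Nat.factorial p.2) with hTdef
  set K1 : ℕ → ℝ := fun m => asc |rho| m * |u| ^ m / (m.factorial : ℝ) with hK1def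
  set K2 : ℕ → ℝ := fun n => asc |sigma| n * |v| ^ n / (n.factorial : ℝ) with hK2def
  set K : ℕ × ℕ → ℝ := fun p => K1 p.1 * K2 p.2 with hKdef
  have hK1sum : Summable K1 := (hasSum_binom |rho| (t := |u|) (by rwa [abs_abs])).summable
  have hK2sum : Summable K2 := (hasSum_binom |sigma| (t := |v|) (by rwa [abs_abs])).summable
  have hK1nn : ∀ m, 0 ≤ K1 m := fun m => div_nonneg (mul_nonneg
    (asc_nonneg (abs_nonneg rho) m) (pow_nonneg (abs_nonneg u) m)) (Nat.cast_nonneg _)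
  have hK2nn : ∀ n, 0 ≤ K2 n := fun n => div_nonneg (mul_nonneg
    (asc_nonneg (abs_nonneg sigma) n) (pow_nonneg (abs_nonneg v) n)) (Nat.cast_nonneg _)
  have hKsum : Summable K := by
    apply summable_mul_of_summable_norm (f := K1) (g := K2)
    · simpa [Real.norm_eq_abs, abs_of_nonneg, hK1nn] using
        hK1sum.congr (fun m => (abs_of_nonneg (hK1nn m)).symm)
    · simpa [Real.norm_eq_abs, abs_of_nonneg, hK2nn] using
        hK2sum.congr (fun n => (abs_of_nonneg (hK2nn n)).symm)
  have hKnn : ∀ p, 0 ≤ K p := fun p => mul_nonneg (hK1nn p.1) (hK2nn p.2)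
  -- pointwise bounds for the series factors
  have habs1 : ∀ x : ℝ, x ∈ Ioc (0:ℝ) 1 → ∀ m : ℕ,
      |asc rho m * (u * x) ^ m / (m.factorial : ℝ)| ≤ K1 m := by
    intro x hx m
    have hxu : |u * x| ≤ |u| := by
      rw [abs_mul]
      calc |u| * |x| ≤ |u| * 1 := by
            apply mul_le_mul_of_nonneg_left _ (abs_nonneg u)
            rw [abs_of_pos hx.1]; exact hx.2
        _ = |u| := mul_one _
    rw [abs_div, abs_mul, abs_pow, Nat.abs_cast]
    have hb1 := abs_asc_le rho m
    have hb2 : |u * x| ^ m ≤ |u| ^ m := pow_le_pow_left₀ (abs_nonneg _) hxu m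
    simp only [hK1def]
    gcongr
    exact asc_nonneg (abs_nonneg rho) m
  have habs2 : ∀ x : ℝ, x ∈ Ioc (0:ℝ) 1 → ∀ n : ℕ,
      |asc sigma n * (v * x) ^ n / (n.factorial : ℝ)| ≤ K2 n := by
    intro x hx n
    have hxv : |v * x| ≤ |v| := by
      rw [abs_mul]
      calc |v| * |x| ≤ |v| * 1 := by
            apply mul_le_mul_of_nonneg_left _ (abs_nonneg v)
            rw [abs_of_pos hx.1]; exact hx.2
        _ = |v| := mul_one _
    rw [abs_div, abs_mul, abs_pow, Nat.abs_cast]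
    have hb1 := abs_asc_le sigma n
    have hb2 : |v * x| ^ n ≤ |v| ^ n := pow_le_pow_left₀ (abs_nonneg _) hxv n
    simp only [hK2def]
    gcongr
    exact asc_nonneg (abs_nonneg sigma) n
  have hbetnn : ∀ x : ℝ, x ∈ Ioc (0:ℝ) 1 → 0 ≤ bet x := by
    intro x hx
    have : (0:ℝ) ≤ 1 - x := by linarith [hx.2]
    exact mul_nonneg (Real.rpow_nonneg (le_of_lt hx.1) _) (Real.rpow_nonneg this _)
  -- Step A : pointwise expansion
  have hexp : ∀ x : ℝ, x ∈ Ioc (0:ℝ) 1 →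
      x ^ (a - 1) * (1 - x) ^ (b - 1) * (1 - u * x) ^ (-rho) * (1 - v * x) ^ (-sigma)
        = ∑' p : ℕ × ℕ, F p x := by
    intro x hx
    have hxu : |u * x| < 1 := by
      rw [abs_mul]
      calc |u| * |x| ≤ |u| * 1 := by
            apply mul_le_mul_of_nonneg_left _ (abs_nonneg u)
            rw [abs_of_pos hx.1]; exact hx.2
        _ = |u| := mul_one _
        _ < 1 := hu
    have hxv : |v * x| < 1 := by
      rw [abs_mul]
      calc |v| * |x| ≤ |v| * 1 := by
            apply mul_le_mul_of_nonneg_left _ (abs_nonneg v)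
            rw [abs_of_pos hx.1]; exact hx.2
        _ = |v| := mul_one _
        _ < 1 := hv
    have h1 := hasSum_binom rho hxu
    have h2 := hasSum_binom sigma hxv
    have hs1 : Summable fun m : ℕ => ‖asc rho m * (u * x) ^ m / (m.factorial : ℝ)‖ := by
      apply Summable.of_nonneg_of_le (fun m => norm_nonneg _) _ hK1sum
      intro m
      rw [Real.norm_eq_abs]
      exact habs1 x hx m
    have hs2 : Summable fun n : ℕ => ‖asc sigma n * (v * x) ^ n / (n.factorial : ℝ)‖ := by
      apply Summable.of_nonneg_of_le (fun n => norm_nonneg _) _ hK2sum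
      intro n
      rw [Real.norm_eq_abs]
      exact habs2 x hx n
    have hmul := (h1.mul h2 (summable_mul_of_summable_norm hs1 hs2)).mul_left (bet x)
    calc x ^ (a - 1) * (1 - x) ^ (b - 1) * (1 - u * x) ^ (-rho) * (1 - v * x) ^ (-sigma)
        = bet x * ((1 - u * x) ^ (-rho) * (1 - v * x) ^ (-sigma)) := by
          simp only [hbetdef]; ring
      _ = ∑' p : ℕ × ℕ, F p x := hmul.tsum_eq.symm
  -- Step B : measurability
  have hmeas : ∀ p : ℕ × ℕ, AEStronglyMeasurable (F p) (volume.restrict (Ioc (0:ℝ) 1)) := by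
    intro p
    apply Measurable.aestronglyMeasurable
    simp only [hFdef, hbetdef]
    fun_prop
  -- Step C : the domination bound
  have hbetInt : IntegrableOn bet (Ioc 0 1) := beta_integrable ha hb
  set B : ℝ := ∫ x in Ioc (0:ℝ) 1, bet x with hBdef
  have hFbound : ∀ p : ℕ × ℕ, ∀ x ∈ Ioc (0:ℝ) 1, ‖F p x‖ ≤ K p * bet x := by
    intro p x hx
    have key : |asc rho p.1 * (u * x) ^ p.1 / (p.1.factorial:ℝ) *
        (asc sigma p.2 * (v * x) ^ p.2 / (p.2.factorial:ℝ))| ≤ K1 p.1 * K2 p.2 := by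
      rw [abs_mul]
      exact mul_le_mul (habs1 x hx p.1) (habs2 x hx p.2) (abs_nonneg _) (hK1nn p.1)
    rw [Real.norm_eq_abs,
      show F p x = bet x * (asc rho p.1 * (u * x) ^ p.1 / (p.1.factorial:ℝ) *
        (asc sigma p.2 * (v * x) ^ p.2 / (p.2.factorial:ℝ))) from rfl,
      abs_mul, abs_of_nonneg (hbetnn x hx), mul_comm (K p) (bet x)]
    exact mul_le_mul_of_nonneg_left key (hbetnn x hx)
  have hlint : ∑' p : ℕ × ℕ, ∫⁻ x, ‖F p x‖₊ ∂(volume.restrict (Ioc (0:ℝ) 1)) ≠ ⊤ := by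
    have hlb : ∀ p : ℕ × ℕ, ∫⁻ x, ‖F p x‖₊ ∂(volume.restrict (Ioc (0:ℝ) 1))
        ≤ ENNReal.ofReal (K p * B) := by
      intro p
      have hmono : ∫⁻ x, ‖F p x‖₊ ∂(volume.restrict (Ioc (0:ℝ) 1))
          ≤ ∫⁻ x, ENNReal.ofReal (K p * bet x) ∂(volume.restrict (Ioc (0:ℝ) 1)) := by
        apply lintegral_mono_ae
        filter_upwards [ae_restrict_mem measurableSet_Ioc] with x hx
        rw [← enorm_eq_nnnorm, ← ofReal_norm]
        exact ENNReal.ofReal_le_ofReal (hFbound p x hx)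
      refine hmono.trans (le_of_eq ?_)
      rw [← ofReal_integral_eq_lintegral_ofReal (hbetInt.const_mul (K p))]
      · rw [MeasureTheory.integral_const_mul]
      · filter_upwards [ae_restrict_mem measurableSet_Ioc] with x hx
        exact mul_nonneg (hKnn p) (hbetnn x hx)
    refine ne_of_lt (lt_of_le_of_lt (ENNReal.tsum_le_tsum hlb) ?_)
    rw [← ENNReal.ofReal_tsum_of_nonneg (fun p => mul_nonneg (hKnn p) ?_) (hKsum.mul_right B)]
    · exact ENNReal.ofReal_lt_top
    · rw [hBdef]
      exact setIntegral_nonneg measurableSet_Ioc hbetnn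
  -- Step D : term-by-term integration
  have hterm : ∀ p : ℕ × ℕ, (∫ x in Ioc (0:ℝ) 1, F p x) =
      (Real.Gamma b * Real.Gamma a / Real.Gamma (b + a)) * T p := by
    rintro ⟨m, n⟩
    set k : ℕ := m + n with hkdef
    have hcongr : ∀ x ∈ Ioc (0:ℝ) 1, F (m, n) x =
        (asc rho m * u ^ m / (m.factorial : ℝ)) * (asc sigma n * v ^ n / (n.factorial : ℝ)) *
          (x ^ (a + k - 1) * (1 - x) ^ (b - 1)) := by
      intro x hx
      have hx0 : (0:ℝ) < x := hx.1
      have hxk : x ^ (a + (k:ℝ) - 1) = x ^ (a - 1) * x ^ (k:ℝ) := by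
        rw [← Real.rpow_add hx0]; ring_nf
      have hxn : x ^ (k:ℝ) = x ^ m * x ^ n := by
        rw [Real.rpow_natCast, hkdef, pow_add]
      simp only [hFdef, hbetdef]
      rw [hxk, hxn, mul_pow, mul_pow]
      ring
    rw [setIntegral_congr_fun measurableSet_Ioc hcongr, MeasureTheory.integral_const_mul]
    have hak : (0:ℝ) < a + k := by positivity
    rw [beta_eq hak hb]
    have hGk : Real.Gamma (a + (k:ℝ)) = asc a k * Real.Gamma a := Gamma_add_nat ha k
    have hGkb : Real.Gamma (a + (k:ℝ) + b) = asc (a + b) k * Real.Gamma (a + b) := by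
      rw [show a + (k:ℝ) + b = (a + b) + (k:ℝ) by ring]
      exact Gamma_add_nat (by linarith) k
    rw [hGk, hGkb]
    have hGba : Real.Gamma (b + a) = Real.Gamma (a + b) := by rw [add_comm]
    have hascne : asc (a + b) k ≠ 0 := ne_of_gt (asc_pos (by linarith) k)
    have hmf : ((m.factorial : ℝ)) ≠ 0 := by positivity
    have hnf : ((n.factorial : ℝ)) ≠ 0 := by positivity
    have hGa : Real.Gamma a ≠ 0 := ne_of_gt (Real.Gamma_pos_of_pos ha)
    have hGb : Real.Gamma b ≠ 0 := ne_of_gt (Real.Gamma_pos_of_pos hb)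
    rw [hTdef, hGba]
    show (asc rho m * u ^ m / (m.factorial:ℝ)) * (asc sigma n * v ^ n / (n.factorial:ℝ)) *
        (asc a k * Real.Gamma a * Real.Gamma b / (asc (a + b) k * Real.Gamma (a + b))) =
      Real.Gamma b * Real.Gamma a / Real.Gamma (a + b) *
        ((asc a (m + n) * asc rho m * asc sigma n / asc (a + b) (m + n)) *
          u ^ m * v ^ n / ((m.factorial : ℝ) * (n.factorial : ℝ)))
    rw [← hkdef]
    field_simp
  -- Step E : summability of T
  have hTbound : ∀ p : ℕ × ℕ, ‖T p‖ ≤ K p := by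
    rintro ⟨m, n⟩
    set k : ℕ := m + n with hkdef
    have h1 : (0:ℝ) < asc (a + b) k := asc_pos (by linarith) k
    have h2 : asc a k ≤ asc (a + b) k := asc_le_asc (le_of_lt ha) (by linarith) k
    have h3 : 0 ≤ asc a k := asc_nonneg (le_of_lt ha) k
    have hratio : asc a k / asc (a + b) k ≤ 1 := by
      rw [div_le_one h1]; exact h2
    have hratio0 : 0 ≤ asc a k / asc (a + b) k := div_nonneg h3 (le_of_lt h1)
    rw [Real.norm_eq_abs, hTdef]
    show |((asc a k * asc rho m * asc sigma n / asc (a + b) k) * u ^ m * v ^ n /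
        ((m.factorial : ℝ) * (n.factorial : ℝ)))| ≤ K1 m * K2 n
    rw [abs_div, abs_mul, abs_mul, abs_div, abs_mul, abs_mul, abs_pow, abs_pow,
      abs_of_nonneg h3, abs_of_nonneg (le_of_lt h1),
      abs_of_nonneg (by positivity : (0:ℝ) ≤ (m.factorial : ℝ) * (n.factorial : ℝ))]
    have key : asc a k * |asc rho m| * |asc sigma n| / asc (a + b) k ≤
        asc |rho| m * asc |sigma| n := by
      have e1 : asc a k * |asc rho m| * |asc sigma n| / asc (a + b) k =
          (asc a k / asc (a + b) k) * (|asc rho m| * |asc sigma n|) := by ring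
      rw [e1]
      calc (asc a k / asc (a + b) k) * (|asc rho m| * |asc sigma n|)
          ≤ 1 * (|asc rho m| * |asc sigma n|) := by
            apply mul_le_mul_of_nonneg_right hratio (by positivity)
        _ = |asc rho m| * |asc sigma n| := one_mul _
        _ ≤ asc |rho| m * asc |sigma| n :=
            mul_le_mul (abs_asc_le rho m) (abs_asc_le sigma n) (abs_nonneg _)
              (asc_nonneg (abs_nonneg rho) m)
    calc asc a k * |asc rho m| * |asc sigma n| / asc (a + b) k * |u| ^ m * |v| ^ n /
          ((m.factorial : ℝ) * (n.factorial : ℝ))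
        ≤ asc |rho| m * asc |sigma| n * |u| ^ m * |v| ^ n /
          ((m.factorial : ℝ) * (n.factorial : ℝ)) := by
          apply div_le_div_of_nonneg_right _ (by positivity)
          apply mul_le_mul_of_nonneg_right _ (by positivity)
          exact mul_le_mul_of_nonneg_right key (by positivity)
      _ = K1 m * K2 n := by
          rw [hK1def, hK2def]
          field_simp
  have hTsum : Summable T := Summable.of_norm_bounded hKsum hTbound
  -- Final assembly
  rw [intervalIntegral.integral_of_le (by norm_num : (0:ℝ) ≤ 1)]
  rw [setIntegral_congr_fun measurableSet_Ioc hexp]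
  rw [MeasureTheory.integral_tsum hmeas hlint]
  rw [tsum_congr hterm, tsum_mul_left]
  congr 1
  exact Summable.tsum_prod' hTsum hTsum.prod_factor
end

section
/- Let α > 0, ν > 0, β ∈ ℝ, ξ > 0, y ∈ ℝ. Define s̃(t) = (β(1-e^{-αt}) + y e^{-αt})² + (ν/2)(1 - e^{-2αt}) (the second moment of the OU process at time t from y). Then the function s(t) = e^{-ξt}·s̃(t) + ξ·∫₀ᵗ e^{-ξτ}·s̃₀(τ)dτ, where s̃₀ is s̃ with y = 0, equals αν/(ξ+2α) + 2α²β²/((ξ+α)(ξ+2α)) + 2β(y - αβ/(ξ+α))·e^{-(ξ+α)t} + (y² - 2βy + 2αβ²/(ξ+2α) - αν/(ξ+2α))·e^{-(ξ+2α)t}. -/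
open Real intervalIntegral
set_option maxHeartbeats 1000000

lemma int_exp_mul (c t : ℝ) (hc : c ≠ 0) :
    ∫ τ in (0:ℝ)..t, Real.exp (c * τ) = (Real.exp (c * t) - 1) / c := by
  have h := intervalIntegral.integral_comp_mul_left (a := (0:ℝ)) (b := t)
    (fun x => Real.exp x) hc
  simp [integral_exp] at h
  rw [h]
  field_simp

lemma int_exp_neg (c t : ℝ) (hc : c ≠ 0) :
    ∫ τ in (0:ℝ)..t, Real.exp (-c * τ) = (1 - Real.exp (-c * t)) / c := by
  rw [int_exp_mul (-c) t (neg_ne_zero.mpr hc), div_neg, ← neg_div, neg_sub]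

/-- Second moment of the OU jump-diffusion with catastrophes: explicit formula. -/
theorem ou_catastrophe_second_moment (alpha beta nu xi y : ℝ)
    (halpha : 0 < alpha) (hnu : 0 < nu) (hxi : 0 < xi) :
    let stilde : ℝ → ℝ → ℝ := fun z t =>
      (beta * (1 - Real.exp (-alpha * t)) + z * Real.exp (-alpha * t)) ^ 2 +
        nu / 2 * (1 - Real.exp (-2 * alpha * t))
    ∀ t : ℝ, 0 ≤ t →
      Real.exp (-xi * t) * stilde y t +
          xi * ∫ τ in (0:ℝ)..t, Real.exp (-xi * τ) * stilde 0 τ =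
        alpha * nu / (xi + 2 * alpha) +
          2 * alpha ^ 2 * beta ^ 2 / ((xi + alpha) * (xi + 2 * alpha)) +
          2 * beta * (y - alpha * beta / (xi + alpha)) * Real.exp (-(xi + alpha) * t) +
          (y ^ 2 - 2 * beta * y + 2 * alpha * beta ^ 2 / (xi + 2 * alpha) -
              alpha * nu / (xi + 2 * alpha)) * Real.exp (-(xi + 2 * alpha) * t) := by
  intro stilde t ht
  have hxi' : xi ≠ 0 := ne_of_gt hxi
  have h1 : xi + alpha ≠ 0 := by positivity
  have h2 : xi + 2 * alpha ≠ 0 := by positivity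
  -- rewrite the integrand as a linear combination of exponentials
  have hpt : ∀ τ : ℝ, Real.exp (-xi * τ) * stilde 0 τ =
      (beta ^ 2 + nu / 2) * Real.exp (-xi * τ)
        + (-2 * beta ^ 2) * Real.exp (-(xi + alpha) * τ)
        + (beta ^ 2 - nu / 2) * Real.exp (-(xi + 2 * alpha) * τ) := by
    intro τ
    have e1 : Real.exp (-(xi + alpha) * τ) = Real.exp (-xi * τ) * Real.exp (-alpha * τ) := by
      rw [← Real.exp_add]; ring_nf
    have e2 : Real.exp (-(xi + 2 * alpha) * τ)
        = Real.exp (-xi * τ) * Real.exp (-2 * alpha * τ) := by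
      rw [← Real.exp_add]; ring_nf
    have e3 : Real.exp (-2 * alpha * τ) = Real.exp (-alpha * τ) * Real.exp (-alpha * τ) := by
      rw [← Real.exp_add]; ring_nf
    simp only [stilde, e1, e2, e3]
    ring
  have hint : (∫ τ in (0:ℝ)..t, Real.exp (-xi * τ) * stilde 0 τ)
      = (beta ^ 2 + nu / 2) * ((1 - Real.exp (-xi * t)) / xi)
        + (-2 * beta ^ 2) * ((1 - Real.exp (-(xi + alpha) * t)) / (xi + alpha))
        + (beta ^ 2 - nu / 2) * ((1 - Real.exp (-(xi + 2 * alpha) * t)) / (xi + 2 * alpha)) := by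
    rw [intervalIntegral.integral_congr (g := fun τ =>
      (beta ^ 2 + nu / 2) * Real.exp (-xi * τ)
        + (-2 * beta ^ 2) * Real.exp (-(xi + alpha) * τ)
        + (beta ^ 2 - nu / 2) * Real.exp (-(xi + 2 * alpha) * τ))
      (fun τ _ => hpt τ)]
    have i1 : IntervalIntegrable (fun τ => (beta ^ 2 + nu / 2) * Real.exp (-xi * τ))
        MeasureTheory.volume 0 t := (Continuous.intervalIntegrable (by continuity) _ _)
    have i2 : IntervalIntegrable (fun τ => (-2 * beta ^ 2) * Real.exp (-(xi + alpha) * τ))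
        MeasureTheory.volume 0 t := (Continuous.intervalIntegrable (by continuity) _ _)
    have i3 : IntervalIntegrable (fun τ => (beta ^ 2 - nu / 2) * Real.exp (-(xi + 2 * alpha) * τ))
        MeasureTheory.volume 0 t := (Continuous.intervalIntegrable (by continuity) _ _)
    rw [intervalIntegral.integral_add (i1.add i2) i3, intervalIntegral.integral_add i1 i2,
      intervalIntegral.integral_const_mul, intervalIntegral.integral_const_mul,
      intervalIntegral.integral_const_mul,
      int_exp_neg xi t hxi', int_exp_neg (xi + alpha) t h1,
      int_exp_neg (xi + 2 * alpha) t h2]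
  rw [hint]
  -- expand the first term
  have e1 : Real.exp (-(xi + alpha) * t) = Real.exp (-xi * t) * Real.exp (-alpha * t) := by
    rw [← Real.exp_add]; ring_nf
  have e2 : Real.exp (-(xi + 2 * alpha) * t)
      = Real.exp (-xi * t) * Real.exp (-2 * alpha * t) := by
    rw [← Real.exp_add]; ring_nf
  have e3 : Real.exp (-2 * alpha * t) = Real.exp (-alpha * t) * Real.exp (-alpha * t) := by
    rw [← Real.exp_add]; ring_nf
  simp only [stilde, e1, e2, e3]
  field_simp
  ring
end

section
/- Let α > 0, ν > 0, y ≠ 0. The function g̃(t) = (2α|y| e^{-αt} / (√(πν)·(1 - e^{-2αt})^{3/2})) · exp(-y² e^{-2αt} / (ν(1 - e^{-2αt}))), defined for t > 0, is a probability density on (0,∞): g̃ ≥ 0 and ∫₀^∞ g̃(t)dt = 1. -/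
open Real Set MeasureTheory

/-- The first-passage-time density through 0 of the symmetric OU process is a
probability density on `(0,∞)`. -/
theorem ou_fpt_density_is_density (alpha nu y : ℝ)
    (halpha : 0 < alpha) (hnu : 0 < nu) (hy : y ≠ 0) :
    let gt : ℝ → ℝ := fun t =>
      2 * alpha * |y| * Real.exp (-alpha * t) /
          (Real.sqrt (Real.pi * nu) * (1 - Real.exp (-2 * alpha * t)) ^ ((3:ℝ)/2)) *
        Real.exp (-(y ^ 2 * Real.exp (-2 * alpha * t)) / (nu * (1 - Real.exp (-2 * alpha * t))))
    (∀ t : ℝ, 0 < t → 0 ≤ gt t) ∧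
    (∫ t in Set.Ioi (0:ℝ), gt t) = 1 := by
  intro gt
  have hya : 0 < |y| := abs_pos.mpr hy
  have hc : 0 < |y| / Real.sqrt nu := div_pos hya (Real.sqrt_pos.mpr hnu)
  set c : ℝ := |y| / Real.sqrt nu with hcdef
  have hE : ∀ t : ℝ, 0 < t → 1 < Real.exp (2 * alpha * t) := by
    intro t ht
    exact Real.one_lt_exp_iff.mpr (by positivity)
  have hs1 : ∀ t : ℝ, 0 < t → 0 < 1 - Real.exp (-2 * alpha * t) := by
    intro t ht
    have : Real.exp (-2 * alpha * t) < 1 := by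
      rw [Real.exp_lt_one_iff]; nlinarith
    linarith
  constructor
  · intro t ht
    have h1 := hs1 t ht
    have h2 : (0:ℝ) < Real.pi * nu := by positivity
    positivity
  set f : ℝ → ℝ := fun t => c * (Real.sqrt (Real.exp (2 * alpha * t) - 1))⁻¹ with hfdef
  set f' : ℝ → ℝ := fun t =>
    c * (-(1 / (2 * Real.sqrt (Real.exp (2 * alpha * t) - 1)) *
          (Real.exp (2 * alpha * t) * (2 * alpha))) /
        (Real.sqrt (Real.exp (2 * alpha * t) - 1)) ^ 2) with hf'def
  have hderiv : ∀ t ∈ Ioi (0:ℝ), HasDerivAt f (f' t) t := by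
    intro t ht
    have ha : 0 < Real.exp (2 * alpha * t) - 1 := sub_pos.mpr (hE t ht)
    have h1 : HasDerivAt (fun t : ℝ => 2 * alpha * t) (2 * alpha) t := by
      simpa using (hasDerivAt_id t).const_mul (2 * alpha)
    have h2 : HasDerivAt (fun t : ℝ => Real.exp (2 * alpha * t) - 1)
        (Real.exp (2 * alpha * t) * (2 * alpha)) t :=
      ((Real.hasDerivAt_exp _).comp t h1).sub_const 1
    have h3 : HasDerivAt (fun t : ℝ => Real.sqrt (Real.exp (2 * alpha * t) - 1))
        (1 / (2 * Real.sqrt (Real.exp (2 * alpha * t) - 1)) *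
          (Real.exp (2 * alpha * t) * (2 * alpha))) t :=
      (Real.hasDerivAt_sqrt ha.ne').comp t h2
    have hne : Real.sqrt (Real.exp (2 * alpha * t) - 1) ≠ 0 :=
      (Real.sqrt_pos.mpr ha).ne'
    exact (h3.inv hne).const_mul c
  have hinj : InjOn f (Ioi (0:ℝ)) := by
    intro t1 ht1 t2 ht2 h
    have ha1 : 0 < Real.exp (2 * alpha * t1) - 1 := sub_pos.mpr (hE t1 ht1)
    have ha2 : 0 < Real.exp (2 * alpha * t2) - 1 := sub_pos.mpr (hE t2 ht2)
    have h' : (Real.sqrt (Real.exp (2 * alpha * t1) - 1))⁻¹ =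
        (Real.sqrt (Real.exp (2 * alpha * t2) - 1))⁻¹ :=
      mul_left_cancel₀ hc.ne' h
    have h'' : Real.exp (2 * alpha * t1) - 1 = Real.exp (2 * alpha * t2) - 1 :=
      (Real.sqrt_inj ha1.le ha2.le).mp (inv_injective h')
    have : 2 * alpha * t1 = 2 * alpha * t2 := Real.exp_injective (by linarith)
    exact mul_left_cancel₀ (by positivity) this
  have himg : f '' Ioi (0:ℝ) = Ioi (0:ℝ) := by
    apply Subset.antisymm
    · rintro _ ⟨t, ht, rfl⟩
      have ha : 0 < Real.exp (2 * alpha * t) - 1 := sub_pos.mpr (hE t ht)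
      exact mem_Ioi.mpr (by positivity)
    · intro v hv
      have hv' : (0:ℝ) < v := hv
      refine ⟨Real.log (1 + c ^ 2 / v ^ 2) / (2 * alpha), ?_, ?_⟩
      · have h1 : (1:ℝ) < 1 + c ^ 2 / v ^ 2 := by
          have : 0 < c ^ 2 / v ^ 2 := by positivity
          linarith
        exact mem_Ioi.mpr (div_pos (Real.log_pos h1) (by positivity))
      · have h0 : (0:ℝ) < 1 + c ^ 2 / v ^ 2 := by positivity
        have hexp : Real.exp (2 * alpha * (Real.log (1 + c ^ 2 / v ^ 2) / (2 * alpha))) =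
            1 + c ^ 2 / v ^ 2 := by
          rw [mul_div_cancel₀ _ (by positivity : (2:ℝ) * alpha ≠ 0)]
          exact Real.exp_log h0
        simp only [hfdef, hexp]
        have heq : (1 + c ^ 2 / v ^ 2 - 1) = (c / v) ^ 2 := by field_simp; ring
        rw [heq, Real.sqrt_sq (by positivity)]
        field_simp
  have hgauss : (∫ u in Ioi (0:ℝ), Real.exp (-u ^ 2)) = Real.sqrt Real.pi / 2 := by
    have := integral_gaussian_Ioi 1
    simpa using this
  have hsub := integral_image_eq_integral_abs_deriv_smul measurableSet_Ioi
      (fun t ht => (hderiv t ht).hasDerivWithinAt) hinj (fun u => Real.exp (-u ^ 2))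
  rw [himg] at hsub
  have hpt : ∀ t ∈ Ioi (0:ℝ),
      gt t = (2 / Real.sqrt Real.pi) * (|f' t| * Real.exp (-(f t) ^ 2)) := by
    intro t ht
    have ht' : (0:ℝ) < t := ht
    have ha : 0 < Real.exp (2 * alpha * t) - 1 := sub_pos.mpr (hE t ht)
    have hs : 0 < 1 - Real.exp (-2 * alpha * t) := hs1 t ht
    set E := Real.exp (2 * alpha * t) with hEdef
    have hEpos : 0 < E := Real.exp_pos _
    have hsE : Real.exp (-2 * alpha * t) = E⁻¹ := by
      rw [hEdef, ← Real.exp_neg]; ring_nf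
    have hsq : Real.sqrt E = Real.exp (alpha * t) := by
      rw [hEdef, show 2 * alpha * t = alpha * t + alpha * t by ring, Real.exp_add,
        ← sq, Real.sqrt_sq (Real.exp_pos _).le]
    have hsqa : 0 < Real.sqrt (E - 1) := Real.sqrt_pos.mpr ha
    have hsqE : 0 < Real.sqrt E := Real.sqrt_pos.mpr hEpos
    have hexp_eq : -(y ^ 2 * Real.exp (-2 * alpha * t)) /
        (nu * (1 - Real.exp (-2 * alpha * t))) = -(f t) ^ 2 := by
      simp only [hfdef, hsE]
      rw [mul_pow, inv_pow, Real.sq_sqrt ha.le, hcdef, div_pow, Real.sq_sqrt hnu.le,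
        sq_abs]
      field_simp
    have h1s : 1 - Real.exp (-2 * alpha * t) = (E - 1) / E := by
      rw [hsE]; field_simp
    have hrpow : ((E - 1) / E) ^ ((3:ℝ)/2) = (E - 1) / E * Real.sqrt ((E - 1) / E) := by
      rw [show (3:ℝ)/2 = 1 + 1/2 by norm_num,
        Real.rpow_add (div_pos ha hEpos), Real.rpow_one, Real.sqrt_eq_rpow]
    have habs : |f' t| = c * (alpha * E) / ((E - 1) * Real.sqrt (E - 1)) := by
      simp only [hf'def]
      rw [abs_mul, abs_of_pos hc, abs_div, abs_neg,
        abs_of_pos (by positivity : (0:ℝ) < 1 / (2 * Real.sqrt (E - 1)) * (E * (2 * alpha))),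
        abs_of_pos (by positivity : (0:ℝ) < Real.sqrt (E - 1) ^ 2),
        Real.sq_sqrt ha.le]
      field_simp
    simp only [gt]
    rw [hexp_eq, habs, h1s, hrpow, Real.sqrt_div ha.le, hsq,
      show -alpha * t = -(alpha * t) by ring, Real.exp_neg, Real.sqrt_mul Real.pi_pos.le,
      ← hsq]
    rw [hcdef]
    have hsp : (0:ℝ) < Real.sqrt Real.pi := Real.sqrt_pos.mpr Real.pi_pos
    have hsn : (0:ℝ) < Real.sqrt nu := Real.sqrt_pos.mpr hnu
    field_simp
  rw [MeasureTheory.setIntegral_congr_fun measurableSet_Ioi hpt,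
    MeasureTheory.integral_const_mul]
  have hkey : (∫ t in Ioi (0:ℝ), |f' t| * Real.exp (-(f t) ^ 2)) = Real.sqrt Real.pi / 2 := by
    rw [← hgauss, hsub]
    simp [smul_eq_mul]
  rw [hkey]
  have hsp : Real.sqrt Real.pi ≠ 0 := (Real.sqrt_pos.mpr Real.pi_pos).ne'
  field_simp
end

section
/- Let α > 0, ν > 0, y ≠ 0 and g̃ as above. Then for t ≥ 0, 1 - ∫₀ᵗ g̃(τ)dτ = Erf( |y| e^{-αt} / √(ν(1 - e^{-2αt})) ), where Erf(z) = (2/√π)∫₀^z e^{-u²}du. Consequently the first-passage-time density of the jump-diffusion with catastrophe rate ξ through 0 is g(t) = e^{-ξt} g̃(t) + ξ e^{-ξt}·Erf(|y| e^{-αt}/√(ν(1-e^{-2αt}))). -/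
open Real Set MeasureTheory intervalIntegral Filter Topology

noncomputable def ouG (alpha nu y : ℝ) : ℝ → ℝ := fun t =>
  2 * alpha * |y| * Real.exp (-alpha * t) /
      (Real.sqrt (Real.pi * nu) * (1 - Real.exp (-2 * alpha * t)) ^ ((3:ℝ)/2)) *
    Real.exp (-(y ^ 2 * Real.exp (-2 * alpha * t)) / (nu * (1 - Real.exp (-2 * alpha * t))))

noncomputable def ouH (alpha nu y : ℝ) : ℝ → ℝ := fun t =>
  |y| * Real.exp (-alpha * t) / Real.sqrt (nu * (1 - Real.exp (-2 * alpha * t)))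

noncomputable def ouF (alpha nu y : ℝ) : ℝ → ℝ := fun t =>
  2 / Real.sqrt Real.pi * ∫ u in (0:ℝ)..(ouH alpha nu y t), Real.exp (-u ^ 2)

lemma ouH_hasDerivAt (alpha nu y : ℝ) (halpha : 0 < alpha) (hnu : 0 < nu) (hy : y ≠ 0)
    {τ : ℝ} (hτ : 0 < τ) :
    HasDerivAt (ouH alpha nu y)
      (-(alpha * |y| * Real.exp (-alpha * τ) * nu /
        ((nu * (1 - Real.exp (-2 * alpha * τ))) *
          Real.sqrt (nu * (1 - Real.exp (-2 * alpha * τ)))))) τ := by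
  have hE : Real.exp (-2 * alpha * τ) < 1 := by
    rw [Real.exp_lt_one_iff]; nlinarith
  have hs : 0 < 1 - Real.exp (-2 * alpha * τ) := by linarith
  have hνs : 0 < nu * (1 - Real.exp (-2 * alpha * τ)) := by positivity
  have h1 : HasDerivAt (fun x : ℝ => Real.exp (-alpha * x)) (-alpha * Real.exp (-alpha * τ)) τ := by
    simpa [mul_comm] using (((hasDerivAt_id τ).const_mul (-alpha)).exp)
  have h2 : HasDerivAt (fun x : ℝ => nu * (1 - Real.exp (-2 * alpha * x)))
      (nu * (2 * alpha * Real.exp (-2 * alpha * τ))) τ := by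
    have : HasDerivAt (fun x : ℝ => Real.exp (-2 * alpha * x))
        (-2 * alpha * Real.exp (-2 * alpha * τ)) τ := by
      simpa [mul_comm] using (((hasDerivAt_id τ).const_mul (-2 * alpha)).exp)
    have := (this.const_sub 1).const_mul nu
    exact this.congr_deriv (by ring)
  have h3 := (h2.sqrt (ne_of_gt hνs))
  have h4 := ((h1.const_mul |y|).div h3 (by positivity))
  refine HasDerivAt.congr_deriv h4 ?_
  set E := Real.exp (-2 * alpha * τ) with hE'
  set S := Real.sqrt (nu * (1 - E)) with hS
  have hsq : S ^ 2 = nu * (1 - E) := Real.sq_sqrt hνs.le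
  have hSpos : 0 < S := Real.sqrt_pos.2 hνs
  have expand : (|y| * (-alpha * Real.exp (-alpha * τ)) * S -
      |y| * Real.exp (-alpha * τ) * (nu * (2 * alpha * E) / (2 * S))) / S ^ 2
      = -(alpha * |y| * Real.exp (-alpha * τ) * (S ^ 2 + nu * E)) / (S ^ 2 * S) := by
    field_simp
    ring
  rw [expand, hsq]
  ring

lemma ouF_hasDerivAt (alpha nu y : ℝ) (halpha : 0 < alpha) (hnu : 0 < nu) (hy : y ≠ 0)
    {τ : ℝ} (hτ : 0 < τ) :
    HasDerivAt (ouF alpha nu y) (-(ouG alpha nu y τ)) τ := by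
  have hE : Real.exp (-2 * alpha * τ) < 1 := by
    rw [Real.exp_lt_one_iff]; nlinarith
  have hs : 0 < 1 - Real.exp (-2 * alpha * τ) := by linarith
  have hνs : 0 < nu * (1 - Real.exp (-2 * alpha * τ)) := by positivity
  have hH := ouH_hasDerivAt alpha nu y halpha hnu hy hτ
  have hc : Continuous fun u : ℝ => Real.exp (-u ^ 2) := by continuity
  have hint : HasDerivAt (fun z => ∫ u in (0:ℝ)..z, Real.exp (-u ^ 2))
      (Real.exp (-(ouH alpha nu y τ) ^ 2)) (ouH alpha nu y τ) :=
    intervalIntegral.integral_hasDerivAt_right (hc.intervalIntegrable _ _)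
      (hc.stronglyMeasurableAtFilter _ _) hc.continuousAt
  have comp := (hint.comp τ hH).const_mul (2 / Real.sqrt Real.pi)
  have goal_eq : -(ouG alpha nu y τ) =
      2 / Real.sqrt Real.pi *
        (Real.exp (-(ouH alpha nu y τ) ^ 2) *
          (-(alpha * |y| * Real.exp (-alpha * τ) * nu /
            ((nu * (1 - Real.exp (-2 * alpha * τ))) *
              Real.sqrt (nu * (1 - Real.exp (-2 * alpha * τ))))))) := by
    have hexp2 : Real.exp (-alpha * τ) ^ 2 = Real.exp (-2 * alpha * τ) := by
      rw [sq, ← Real.exp_add]; congr 1; ring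
    have hHsq : (ouH alpha nu y τ) ^ 2 =
        y ^ 2 * Real.exp (-2 * alpha * τ) / (nu * (1 - Real.exp (-2 * alpha * τ))) := by
      rw [ouH]; rw [div_pow, mul_pow, sq_abs, Real.sq_sqrt hνs.le, hexp2]
    have h32 : (1 - Real.exp (-2 * alpha * τ)) ^ ((3:ℝ)/2)
        = (1 - Real.exp (-2 * alpha * τ)) * Real.sqrt (1 - Real.exp (-2 * alpha * τ)) := by
      rw [show (3:ℝ)/2 = 1 + 1/2 by norm_num, Real.rpow_add hs, Real.rpow_one,
        ← Real.sqrt_eq_rpow]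
    have hsπν : Real.sqrt (Real.pi * nu) = Real.sqrt Real.pi * Real.sqrt nu :=
      Real.sqrt_mul Real.pi_pos.le nu
    have hsνs : Real.sqrt (nu * (1 - Real.exp (-2 * alpha * τ)))
        = Real.sqrt nu * Real.sqrt (1 - Real.exp (-2 * alpha * τ)) :=
      Real.sqrt_mul hnu.le _
    rw [ouG, hHsq, h32, hsπν, hsνs, neg_div]
    have hπ : (0:ℝ) < Real.sqrt Real.pi := Real.sqrt_pos.2 Real.pi_pos
    have hν : (0:ℝ) < Real.sqrt nu := Real.sqrt_pos.2 hnu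
    have hss : (0:ℝ) < Real.sqrt (1 - Real.exp (-2 * alpha * τ)) := Real.sqrt_pos.2 hs
    set σ := 1 - Real.exp (-2 * alpha * τ) with hσ
    field_simp [hs.ne', hnu.ne', hπ.ne', hν.ne', hss.ne']
  rw [goal_eq]
  exact comp

lemma ouS_tendsto (alpha : ℝ) (halpha : 0 < alpha) :
    Tendsto (fun τ : ℝ => 1 - Real.exp (-2 * alpha * τ)) (𝓝[>] 0) (𝓝[>] 0) := by
  rw [tendsto_nhdsWithin_iff]
  constructor
  · have : Continuous fun τ : ℝ => 1 - Real.exp (-2 * alpha * τ) := by continuity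
    simpa using (this.tendsto 0).mono_left nhdsWithin_le_nhds
  · filter_upwards [self_mem_nhdsWithin] with τ (hτ : 0 < τ)
    have : Real.exp (-2 * alpha * τ) < 1 := by rw [Real.exp_lt_one_iff]; nlinarith
    simpa using this

lemma ouG_tendsto_zero (alpha nu y : ℝ) (halpha : 0 < alpha) (hnu : 0 < nu) (hy : y ≠ 0) :
    Tendsto (ouG alpha nu y) (𝓝[>] 0) (𝓝 0) := by
  set c : ℝ := y ^ 2 * Real.exp (-2 * alpha) / nu with hc
  have hcpos : 0 < c := by
    have : 0 < y ^ 2 := by positivity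
    positivity
  have hinv : Tendsto (fun τ : ℝ => (1 - Real.exp (-2 * alpha * τ))⁻¹) (𝓝[>] 0) atTop :=
    tendsto_inv_nhdsGT_zero.comp (ouS_tendsto alpha halpha)
  have hbig := (tendsto_rpow_mul_exp_neg_mul_atTop_nhds_zero ((3:ℝ)/2) c hcpos).comp hinv
  have hB : Tendsto (fun τ : ℝ => 2 * alpha * |y| / Real.sqrt (Real.pi * nu) *
      (((1 - Real.exp (-2 * alpha * τ))⁻¹) ^ ((3:ℝ)/2) *
        Real.exp (-c * (1 - Real.exp (-2 * alpha * τ))⁻¹))) (𝓝[>] 0) (𝓝 0) := by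
    simpa using hbig.const_mul (2 * alpha * |y| / Real.sqrt (Real.pi * nu))
  refine squeeze_zero' ?_ ?_ hB
  · filter_upwards [self_mem_nhdsWithin] with τ (hτ : 0 < τ)
    have hE : Real.exp (-2 * alpha * τ) < 1 := by rw [Real.exp_lt_one_iff]; nlinarith
    have hs : 0 < 1 - Real.exp (-2 * alpha * τ) := by linarith
    rw [ouG]
    have h1 : 0 ≤ 2 * alpha * |y| * Real.exp (-alpha * τ) := by positivity
    have h2 : 0 ≤ Real.sqrt (Real.pi * nu) * (1 - Real.exp (-2 * alpha * τ)) ^ ((3:ℝ)/2) := by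
      have := Real.rpow_nonneg hs.le ((3:ℝ)/2)
      positivity
    exact mul_nonneg (div_nonneg h1 h2) (Real.exp_nonneg _)
  · filter_upwards [Ioo_mem_nhdsGT zero_lt_one] with τ hτ
    obtain ⟨hτ0, hτ1⟩ := hτ
    have hE : Real.exp (-2 * alpha * τ) < 1 := by rw [Real.exp_lt_one_iff]; nlinarith
    have hs : 0 < 1 - Real.exp (-2 * alpha * τ) := by linarith
    set σ := 1 - Real.exp (-2 * alpha * τ) with hσ
    have hinvr : (σ⁻¹) ^ ((3:ℝ)/2) = (σ ^ ((3:ℝ)/2))⁻¹ := Real.inv_rpow hs.le _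
    have hrpos : 0 < σ ^ ((3:ℝ)/2) := Real.rpow_pos_of_pos hs _
    have hπν : 0 < Real.sqrt (Real.pi * nu) := Real.sqrt_pos.2 (by positivity)
    rw [ouG]
    have hR : 2 * alpha * |y| / Real.sqrt (Real.pi * nu) * (σ ^ ((3:ℝ)/2))⁻¹ =
        2 * alpha * |y| / (Real.sqrt (Real.pi * nu) * σ ^ ((3:ℝ)/2)) := by
      field_simp
    have front : 2 * alpha * |y| * Real.exp (-alpha * τ) /
        (Real.sqrt (Real.pi * nu) * σ ^ ((3:ℝ)/2)) ≤
        2 * alpha * |y| / Real.sqrt (Real.pi * nu) * (σ⁻¹) ^ ((3:ℝ)/2) := by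
      rw [hinvr, hR]
      have hD : 0 < Real.sqrt (Real.pi * nu) * σ ^ ((3:ℝ)/2) := by positivity
      rw [div_le_div_iff_of_pos_right hD]
      have h1 : Real.exp (-alpha * τ) ≤ 1 := Real.exp_le_one_iff.2 (by nlinarith)
      simpa using mul_le_mul_of_nonneg_left h1 (show (0:ℝ) ≤ 2 * alpha * |y| by positivity)
    have hceq : -c * σ⁻¹ = -(y ^ 2 * Real.exp (-2 * alpha)) / (nu * σ) := by
      rw [hc, neg_mul, ← div_eq_mul_inv, div_div, neg_div]
    have expb : Real.exp (-(y ^ 2 * Real.exp (-2 * alpha * τ)) / (nu * σ)) ≤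
        Real.exp (-c * σ⁻¹) := by
      have hdivs : y ^ 2 * Real.exp (-2 * alpha) / (nu * σ) ≤
          y ^ 2 * Real.exp (-2 * alpha * τ) / (nu * σ) := by
        rw [div_le_div_iff_of_pos_right (mul_pos hnu hs)]
        have h2 : Real.exp (-2 * alpha) ≤ Real.exp (-2 * alpha * τ) :=
          Real.exp_le_exp.2 (by nlinarith [mul_pos halpha (sub_pos.2 hτ1)])
        exact mul_le_mul_of_nonneg_left h2 (by positivity)
      rw [Real.exp_le_exp, hceq, neg_div, neg_div]
      exact neg_le_neg hdivs
    calc 2 * alpha * |y| * Real.exp (-alpha * τ) / (Real.sqrt (Real.pi * nu) * σ ^ ((3:ℝ)/2)) *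
          Real.exp (-(y ^ 2 * Real.exp (-2 * alpha * τ)) / (nu * σ))
        ≤ 2 * alpha * |y| / Real.sqrt (Real.pi * nu) * (σ⁻¹) ^ ((3:ℝ)/2) *
          Real.exp (-c * σ⁻¹) := by
          apply mul_le_mul front expb (Real.exp_nonneg _)
          positivity
      _ = 2 * alpha * |y| / Real.sqrt (Real.pi * nu) *
          ((σ⁻¹) ^ ((3:ℝ)/2) * Real.exp (-c * σ⁻¹)) := by ring

lemma ouH_tendsto_atTop (alpha nu y : ℝ) (halpha : 0 < alpha) (hnu : 0 < nu) (hy : y ≠ 0) :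
    Tendsto (ouH alpha nu y) (𝓝[>] 0) atTop := by
  have hnum : Tendsto (fun τ : ℝ => |y| * Real.exp (-alpha * τ)) (𝓝[>] 0) (𝓝 |y|) := by
    have : Continuous fun τ : ℝ => |y| * Real.exp (-alpha * τ) := by continuity
    simpa using (this.tendsto 0).mono_left nhdsWithin_le_nhds
  have hden : Tendsto (fun τ : ℝ => Real.sqrt (nu * (1 - Real.exp (-2 * alpha * τ))))
      (𝓝[>] 0) (𝓝[>] 0) := by
    rw [tendsto_nhdsWithin_iff]
    constructor
    · have : Continuous fun τ : ℝ => Real.sqrt (nu * (1 - Real.exp (-2 * alpha * τ))) := by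
        continuity
      simpa using (this.tendsto 0).mono_left nhdsWithin_le_nhds
    · filter_upwards [self_mem_nhdsWithin] with τ (hτ : 0 < τ)
      have hE : Real.exp (-2 * alpha * τ) < 1 := by rw [Real.exp_lt_one_iff]; nlinarith
      exact Real.sqrt_pos.2 (by nlinarith)
  have hinv : Tendsto (fun τ : ℝ => (Real.sqrt (nu * (1 - Real.exp (-2 * alpha * τ))))⁻¹)
      (𝓝[>] 0) atTop := tendsto_inv_nhdsGT_zero.comp hden
  have := hnum.pos_mul_atTop (abs_pos.2 hy) hinv
  refine this.congr fun τ => ?_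
  rw [ouH, div_eq_mul_inv]

lemma ouF_tendsto_one (alpha nu y : ℝ) (halpha : 0 < alpha) (hnu : 0 < nu) (hy : y ≠ 0) :
    Tendsto (ouF alpha nu y) (𝓝[>] 0) (𝓝 1) := by
  have hIO : IntegrableOn (fun u : ℝ => Real.exp (-u ^ 2)) (Ioi 0) := by
    have := (integrable_exp_neg_mul_sq (b := 1) one_pos).integrableOn (s := Ioi (0:ℝ))
    simpa using this
  have hint := intervalIntegral_tendsto_integral_Ioi 0 hIO
    (ouH_tendsto_atTop alpha nu y halpha hnu hy)
  have hval : ∫ u in Ioi (0:ℝ), Real.exp (-u ^ 2) = Real.sqrt Real.pi / 2 := by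
    have := integral_gaussian_Ioi 1
    simpa using this
  rw [hval] at hint
  have := hint.const_mul (2 / Real.sqrt Real.pi)
  have hπ : Real.sqrt Real.pi ≠ 0 := (Real.sqrt_pos.2 Real.pi_pos).ne'
  have h1 : 2 / Real.sqrt Real.pi * (Real.sqrt Real.pi / 2) = 1 := by field_simp
  rw [h1] at this
  exact this

lemma ouG_contOn (alpha nu y : ℝ) (halpha : 0 < alpha) (hnu : 0 < nu) (hy : y ≠ 0) :
    ContinuousOn (ouG alpha nu y) (Ici 0) := by
  intro x hx
  rcases eq_or_lt_of_le (mem_Ici.mp hx) with h0 | hpos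
  · subst h0  -- ⊢ x = 0 case?  h0 : 0 = x
    have h0val : ouG alpha nu y 0 = 0 := by
      simp [ouG]
    rw [ContinuousWithinAt, h0val]
    have : 𝓝[Ici (0:ℝ)] 0 = pure 0 ⊔ 𝓝[>] (0:ℝ) := by
      rw [← nhdsWithin_singleton, ← nhdsWithin_union]
      congr 1
      rw [Set.singleton_union, Set.Ioi_insert]
    rw [this, tendsto_sup]
    constructor
    · have : ouG alpha nu y 0 = 0 := h0val
      simpa [this] using tendsto_pure_nhds (ouG alpha nu y) 0
    · exact ouG_tendsto_zero alpha nu y halpha hnu hy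
  · have hE : Real.exp (-2 * alpha * x) < 1 := by rw [Real.exp_lt_one_iff]; nlinarith
    have hs : 0 < 1 - Real.exp (-2 * alpha * x) := by linarith
    apply ContinuousAt.continuousWithinAt
    have c1 : Continuous fun τ : ℝ => 2 * alpha * |y| * Real.exp (-alpha * τ) := by continuity
    have c2 : Continuous fun τ : ℝ =>
        Real.sqrt (Real.pi * nu) * (1 - Real.exp (-2 * alpha * τ)) ^ ((3:ℝ)/2) := by
      apply continuous_const.mul
      apply Continuous.rpow_const (by continuity)
      intro τ; right; norm_num
    have c3 : Continuous fun τ : ℝ => -(y ^ 2 * Real.exp (-2 * alpha * τ)) := by continuity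
    have c4 : Continuous fun τ : ℝ => nu * (1 - Real.exp (-2 * alpha * τ)) := by continuity
    have hden1 : Real.sqrt (Real.pi * nu) * (1 - Real.exp (-2 * alpha * x)) ^ ((3:ℝ)/2) ≠ 0 := by
      have := Real.rpow_pos_of_pos hs ((3:ℝ)/2)
      have hπν : 0 < Real.sqrt (Real.pi * nu) := Real.sqrt_pos.2 (by positivity)
      positivity
    have hden2 : nu * (1 - Real.exp (-2 * alpha * x)) ≠ 0 := by positivity
    exact ((c1.continuousAt.div c2.continuousAt hden1).mul
      (Real.continuous_exp.continuousAt.comp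
        (c3.continuousAt.div c4.continuousAt hden2)))


/-- Survival function of the symmetric OU first-passage time through 0 in terms of the
error function, and the resulting first-passage-time density of the jump-diffusion
with catastrophes at rate ξ. -/
theorem ou_fpt_survival_erf (alpha nu y xi : ℝ)
    (halpha : 0 < alpha) (hnu : 0 < nu) (hy : y ≠ 0) (hxi : 0 < xi) :
    let gt : ℝ → ℝ := fun t =>
      2 * alpha * |y| * Real.exp (-alpha * t) /
          (Real.sqrt (Real.pi * nu) * (1 - Real.exp (-2 * alpha * t)) ^ ((3:ℝ)/2)) *
        Real.exp (-(y ^ 2 * Real.exp (-2 * alpha * t)) / (nu * (1 - Real.exp (-2 * alpha * t))))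
    let Erf : ℝ → ℝ := fun z => 2 / Real.sqrt Real.pi * ∫ u in (0:ℝ)..z, Real.exp (-u ^ 2)
    ∀ t : ℝ, 0 < t →
      (1 - ∫ τ in (0:ℝ)..t, gt τ) =
        Erf (|y| * Real.exp (-alpha * t) / Real.sqrt (nu * (1 - Real.exp (-2 * alpha * t)))) ∧
      Real.exp (-xi * t) * gt t + xi * Real.exp (-xi * t) * (1 - ∫ τ in (0:ℝ)..t, gt τ) =
        Real.exp (-xi * t) * gt t + xi * Real.exp (-xi * t) *
          Erf (|y| * Real.exp (-alpha * t) / Real.sqrt (nu * (1 - Real.exp (-2 * alpha * t)))) := by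
  intro gt Erf t ht
  have hgt : gt = ouG alpha nu y := rfl
  have hErf : Erf (|y| * Real.exp (-alpha * t) /
      Real.sqrt (nu * (1 - Real.exp (-2 * alpha * t)))) = ouF alpha nu y t := rfl
  have huIcc : uIcc (0:ℝ) t = Icc 0 t := uIcc_of_le ht.le
  have hconts : ContinuousOn (ouG alpha nu y) (uIcc 0 t) := by
    rw [huIcc]
    exact (ouG_contOn alpha nu y halpha hnu hy).mono Icc_subset_Ici_self
  have hii : IntervalIntegrable (ouG alpha nu y) volume 0 t := hconts.intervalIntegrable
  have ftc : ∀ ε ∈ Ioo (0:ℝ) t, ∫ τ in ε..t, ouG alpha nu y τ =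
      ouF alpha nu y ε - ouF alpha nu y t := by
    intro ε hε
    have h1 : ∀ x ∈ uIcc ε t, HasDerivAt (fun τ => -ouF alpha nu y τ) (ouG alpha nu y x) x := by
      intro x hx
      rw [uIcc_of_le hε.2.le] at hx
      have hx0 : 0 < x := lt_of_lt_of_le hε.1 hx.1
      exact (ouF_hasDerivAt alpha nu y halpha hnu hy hx0).neg.congr_deriv (neg_neg _)
    have h2 : IntervalIntegrable (ouG alpha nu y) volume ε t := by
      apply hii.mono_set
      rw [huIcc, uIcc_of_le hε.2.le]
      exact Icc_subset_Icc hε.1.le le_rfl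
    have := intervalIntegral.integral_eq_sub_of_hasDerivAt h1 h2
    rw [this]; ring
  have hIccmem : Icc (0:ℝ) t ∈ 𝓝[>] (0:ℝ) :=
    Filter.mem_of_superset (Ioo_mem_nhdsGT ht) Ioo_subset_Icc_self
  have l1 : Tendsto (fun ε => ∫ τ in ε..t, ouG alpha nu y τ) (𝓝[>] 0)
      (𝓝 (∫ τ in (0:ℝ)..t, ouG alpha nu y τ)) := by
    have hIO : IntegrableOn (ouG alpha nu y) (uIcc 0 t) volume :=
      hconts.integrableOn_compact (by rw [huIcc]; exact isCompact_Icc)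
    have hcont := intervalIntegral.continuousOn_primitive_interval_left (f := ouG alpha nu y)
      (μ := volume) (a := 0) (b := t) hIO
    have h0mem : (0:ℝ) ∈ uIcc (0:ℝ) t := by rw [huIcc]; exact ⟨le_rfl, ht.le⟩
    have := (hcont 0 h0mem).tendsto
    exact this.mono_left (nhdsWithin_le_of_mem (by rwa [huIcc]))
  have l2 : Tendsto (fun ε => ouF alpha nu y ε - ouF alpha nu y t) (𝓝[>] (0:ℝ))
      (𝓝 (1 - ouF alpha nu y t)) :=
    (ouF_tendsto_one alpha nu y halpha hnu hy).sub_const _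
  have hev : (fun ε => ∫ τ in ε..t, ouG alpha nu y τ) =ᶠ[𝓝[>] (0:ℝ)]
      fun ε => ouF alpha nu y ε - ouF alpha nu y t := by
    filter_upwards [Ioo_mem_nhdsGT ht] with ε hε using ftc ε hε
  have leq : ∫ τ in (0:ℝ)..t, ouG alpha nu y τ = 1 - ouF alpha nu y t :=
    tendsto_nhds_unique (l1.congr' hev) l2
  constructor
  · rw [hgt, leq, hErf]; ring
  · rw [hgt, leq, hErf]; ring
end

section
/- For λ, μ > 0 with ρ = λ/μ, N a positive integer, and n ∈ {-N,...,N}, the limit as t → ∞ of the transition probability p̃_{j,n}(t) (given by the binomial-convolution formula with parameters b₁(t), b₂(t)) equals C(2N, N-n)·(1+ρ)^{-2N}·ρ^{n+N}, independently of the initial state j. -/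
open Real Finset Filter Topology

/-- Transition probability of the Ehrenfest model without catastrophes on `{-N,…,N}`,
with birth rates `λ(N-n)` and death rates `μ(N+n)`, via the binomial convolution. -/
noncomputable def ehrenfestP (lam mu : ℝ) (N : ℕ) (j n : ℤ) (t : ℝ) : ℝ :=
  let b1 : ℝ := (lam + mu * Real.exp (-(lam + mu) * t)) / (lam + mu)
  let b2 : ℝ := lam / (lam + mu) * (1 - Real.exp (-(lam + mu) * t))
  ∑ i ∈ Finset.Icc (max 0 (j + n)) (min ((N:ℤ) + n) ((N:ℤ) + j)),
    (((N:ℤ) + j).toNat.choose i.toNat : ℝ) *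
      (((N:ℤ) - j).toNat.choose ((N:ℤ) + n - i).toNat : ℝ) *
      b1 ^ i.toNat * (1 - b1) ^ ((N:ℤ) + j - i).toNat *
      b2 ^ ((N:ℤ) + n - i).toNat * (1 - b2) ^ (i - j - n).toNat

/-- The transition probabilities converge as `t → ∞` to the stationary distribution,
independently of the initial state. -/
theorem ehrenfestP_tendsto_stationary (lam mu : ℝ) (hlam : 0 < lam) (hmu : 0 < mu)
    (N : ℕ) (hN : 0 < N) (j n : ℤ)
    (hj : j ∈ Finset.Icc (-(N:ℤ)) (N:ℤ)) (hn : n ∈ Finset.Icc (-(N:ℤ)) (N:ℤ)) :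
    Tendsto (fun t => ehrenfestP lam mu N j n t) atTop
      (𝓝 (((2 * N).choose ((N:ℤ) - n).toNat : ℝ) *
        (1 + lam / mu) ^ (-(2 * N : ℤ)) * (lam / mu) ^ ((n + N).toNat))) := by
  rw [Finset.mem_Icc] at hj hn
  set p : ℝ := lam / (lam + mu) with hp
  have hlm : (0:ℝ) < lam + mu := by linarith
  have hlm' : lam + mu ≠ 0 := ne_of_gt hlm
  have hmu' : mu ≠ 0 := ne_of_gt hmu
  -- limits of b1 and b2
  have hexp : Tendsto (fun t : ℝ => Real.exp (-(lam + mu) * t)) atTop (𝓝 0) := by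
    have h0 : Tendsto (fun t : ℝ => (lam + mu) * t) atTop atTop :=
      Tendsto.const_mul_atTop hlm tendsto_id
    have heq : (fun t : ℝ => Real.exp (-(lam + mu) * t))
        = (fun x => Real.exp (-x)) ∘ (fun t : ℝ => (lam + mu) * t) := by
      funext t; simp only [Function.comp]; ring_nf
    rw [heq]
    exact Real.tendsto_exp_neg_atTop_nhds_zero.comp h0
  have hb1 : Tendsto (fun t : ℝ => (lam + mu * Real.exp (-(lam + mu) * t)) / (lam + mu))
      atTop (𝓝 p) := by
    have : Tendsto (fun t : ℝ => (lam + mu * Real.exp (-(lam + mu) * t)) / (lam + mu))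
        atTop (𝓝 ((lam + mu * 0) / (lam + mu))) :=
      (tendsto_const_nhds.add (tendsto_const_nhds.mul hexp)).div_const _
    simpa [hp] using this
  have hb2 : Tendsto (fun t : ℝ => lam / (lam + mu) * (1 - Real.exp (-(lam + mu) * t)))
      atTop (𝓝 p) := by
    have : Tendsto (fun t : ℝ => lam / (lam + mu) * (1 - Real.exp (-(lam + mu) * t)))
        atTop (𝓝 (lam / (lam + mu) * (1 - 0))) :=
      tendsto_const_nhds.mul (tendsto_const_nhds.sub hexp)
    simpa [hp] using this
  -- notation
  set lo : ℤ := max 0 (j + n) with hlo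
  set hi : ℤ := min ((N:ℤ) + n) ((N:ℤ) + j) with hhi
  set a : ℕ := ((N:ℤ) + j).toNat with ha
  set b : ℕ := ((N:ℤ) - j).toNat with hbdef
  set m : ℕ := (n + (N:ℤ)).toNat with hm
  -- limit of the sum
  have hlim : Tendsto (fun t => ehrenfestP lam mu N j n t) atTop
      (𝓝 (∑ i ∈ Finset.Icc lo hi,
        (a.choose i.toNat : ℝ) * (b.choose ((N:ℤ) + n - i).toNat : ℝ) *
        p ^ i.toNat * (1 - p) ^ ((N:ℤ) + j - i).toNat *
        p ^ ((N:ℤ) + n - i).toNat * (1 - p) ^ (i - j - n).toNat)) := by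
    unfold ehrenfestP
    apply tendsto_finset_sum
    intro i _
    exact ((((tendsto_const_nhds.mul (hb1.pow _)).mul
      ((tendsto_const_nhds.sub hb1).pow _)).mul (hb2.pow _)).mul
      ((tendsto_const_nhds.sub hb2).pow _))
  -- compute the limit value
  have key : (∑ i ∈ Finset.Icc lo hi,
        (a.choose i.toNat : ℝ) * (b.choose ((N:ℤ) + n - i).toNat : ℝ) *
        p ^ i.toNat * (1 - p) ^ ((N:ℤ) + j - i).toNat *
        p ^ ((N:ℤ) + n - i).toNat * (1 - p) ^ (i - j - n).toNat)
      = ((2 * N).choose ((N:ℤ) - n).toNat : ℝ) *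
        (1 + lam / mu) ^ (-(2 * N : ℤ)) * (lam / mu) ^ ((n + N).toNat) := by
    have hstep : ∀ i ∈ Finset.Icc lo hi,
        (a.choose i.toNat : ℝ) * (b.choose ((N:ℤ) + n - i).toNat : ℝ) *
        p ^ i.toNat * (1 - p) ^ ((N:ℤ) + j - i).toNat *
        p ^ ((N:ℤ) + n - i).toNat * (1 - p) ^ (i - j - n).toNat
        = (a.choose i.toNat : ℝ) * (b.choose (m - i.toNat) : ℝ) *
          (p ^ m * (1 - p) ^ (2 * N - m)) := by
      intro i hi'
      rw [Finset.mem_Icc] at hi'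
      have h1 : ((N:ℤ) + n - i).toNat = m - i.toNat := by omega
      have h2 : i.toNat + (m - i.toNat) = m := by omega
      have h3 : ((N:ℤ) + j - i).toNat + (i - j - n).toNat = 2 * N - m := by omega
      rw [h1]
      calc (a.choose i.toNat : ℝ) * (b.choose (m - i.toNat) : ℝ) *
            p ^ i.toNat * (1 - p) ^ ((N:ℤ) + j - i).toNat *
            p ^ (m - i.toNat) * (1 - p) ^ (i - j - n).toNat
          = (a.choose i.toNat : ℝ) * (b.choose (m - i.toNat) : ℝ) *
            ((p ^ i.toNat * p ^ (m - i.toNat)) *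
             ((1 - p) ^ ((N:ℤ) + j - i).toNat * (1 - p) ^ (i - j - n).toNat)) := by ring
        _ = (a.choose i.toNat : ℝ) * (b.choose (m - i.toNat) : ℝ) *
            (p ^ m * (1 - p) ^ (2 * N - m)) := by
            rw [← pow_add, ← pow_add, h2, h3]
    rw [Finset.sum_congr rfl hstep, ← Finset.sum_mul]
    -- turn the integer sum into a nat sum
    have hsum : (∑ i ∈ Finset.Icc lo hi,
          (a.choose i.toNat : ℝ) * (b.choose (m - i.toNat) : ℝ))
        = ∑ k ∈ Finset.range (m + 1), (a.choose k : ℝ) * (b.choose (m - k) : ℝ) := by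
      rw [show (Finset.Icc lo hi) = (Finset.Icc lo.toNat hi.toNat).map
          ⟨(fun k : ℕ => (k : ℤ)), Nat.cast_injective⟩ by
        ext x
        simp only [Finset.mem_map, Finset.mem_Icc, Function.Embedding.coeFn_mk]
        constructor
        · intro hx
          refine ⟨x.toNat, ⟨?_, ?_⟩, ?_⟩ <;> omega
        · rintro ⟨k, hk, rfl⟩
          constructor <;> omega]
      rw [Finset.sum_map]
      simp only [Function.Embedding.coeFn_mk, Int.toNat_natCast]
      apply Finset.sum_subset
      · intro k hk
        rw [Finset.mem_Icc] at hk
        rw [Finset.mem_range]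
        omega
      · intro k hk1 hk2
        rw [Finset.mem_range] at hk1
        rw [Finset.mem_Icc] at hk2
        have : a.choose k = 0 ∨ b.choose (m - k) = 0 := by
          rcases (by omega : k < lo.toNat ∨ hi.toNat < k) with h | h
          · right; apply Nat.choose_eq_zero_of_lt; omega
          · left; apply Nat.choose_eq_zero_of_lt; omega
        rcases this with h | h <;> simp [h]
    rw [hsum]
    -- Vandermonde
    have hvdm : (∑ k ∈ Finset.range (m + 1), (a.choose k : ℝ) * (b.choose (m - k) : ℝ))
        = ((a + b).choose m : ℝ) := by
      rw [Nat.add_choose_eq, Finset.Nat.sum_antidiagonal_eq_sum_range_succ_mk]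
      push_cast
      rfl
    rw [hvdm]
    have hab : a + b = 2 * N := by omega
    have hmn : ((N:ℤ) - n).toNat = 2 * N - m := by omega
    have hmle : m ≤ 2 * N := by omega
    rw [hab, hmn, Nat.choose_symm hmle, ← hm]
    obtain ⟨q, hq⟩ : ∃ q, 2 * N - m = q ∧ 2 * N = m + q := ⟨2 * N - m, rfl, by omega⟩
    obtain ⟨hq1, hq2⟩ := hq
    rw [hq1]
    have h1p : 1 - p = mu / (lam + mu) := by rw [hp]; field_simp; ring
    have e1 : (1 + lam / mu) ^ (-(2 * N : ℤ)) = (mu / (lam + mu)) ^ (m + q) := by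
      rw [show (-(2 * N : ℤ)) = -((2 * N : ℕ) : ℤ) by push_cast; ring,
        zpow_neg, zpow_natCast, ← inv_pow, hq2]
      congr 1
      field_simp
      ring
    have e2 : p ^ m * (1 - p) ^ q = (mu / (lam + mu)) ^ (m + q) * (lam / mu) ^ m := by
      rw [hp, h1p]
      rw [div_pow, div_pow, div_pow, div_pow, pow_add]
      field_simp
      ring
    rw [e1, e2]
    ring
  rw [← key]
  exact hlim
end
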